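/- arXiv:1210.5608 — 3 statements merged into one kernel-verified Lean document; each statement's English description precedes it below -/
import Mathlib

section
/- For every ν ∈ ℂ with Re(ν) > 0, every t ∈ ℂ and every real σ > 0, the integral (1/2πi)·∫_{σ−i∞}^{σ+i∞} w^{−ν−1}·e^{w + t/w} dw over the vertical line Re(w) = σ converges absolutely and equals L_ν(t). -/
open Complex MeasureTheory Real

open Set Filter FourierTransform

noncomputable section

lemma gammaC_integrable {a : ℂ} (ha : 0 < a.re) {c : ℂ} (hc : 0 < c.re) :
    IntegrableOn (fun t : ℝ => (t : ℂ) ^ (a - 1) * Complex.exp (-(c * t))) (Ioi 0) := by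
  have h1 : IntegrableOn (fun x : ℝ => Real.exp (-x) * x ^ (a.re - 1)) (Ioi 0) :=
    Real.GammaIntegral_convergent ha
  have h2 : IntegrableOn (fun t : ℝ => Real.exp (-(c.re * t)) * (c.re * t) ^ (a.re - 1))
      (Ioi 0) := by
    rw [show (0:ℝ) = c.re * 0 by ring] at h1
    simpa using (integrableOn_Ioi_comp_mul_left_iff
      (fun x : ℝ => Real.exp (-x) * x ^ (a.re - 1)) 0 hc).mpr h1
  refine Integrable.mono' (h2.const_mul (c.re ^ (1 - a.re))) ?_ ?_
  · refine (ContinuousOn.aestronglyMeasurable ?_ measurableSet_Ioi)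
    refine ContinuousOn.mul ?_ (Continuous.continuousOn (by fun_prop))
    intro t ht
    exact (Complex.continuousAt_ofReal_cpow_const _ _ (Or.inr (ne_of_gt ht))).continuousWithinAt
  · filter_upwards [ae_restrict_mem measurableSet_Ioi] with t ht
    rw [mem_Ioi] at ht
    rw [norm_mul,
      norm_cpow_eq_rpow_re_of_pos ht, Complex.norm_exp]
    have hre : (-(c * t)).re = -(c.re * t) := by
      simp [Complex.mul_re]
    rw [hre, sub_re, one_re]
    rw [Real.mul_rpow hc.le ht.le]
    have : c.re ^ (1 - a.re) * (Real.exp (-(c.re * t)) * (c.re ^ (a.re - 1) * t ^ (a.re - 1)))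
        = (c.re ^ (1 - a.re) * c.re ^ (a.re - 1)) * (t ^ (a.re - 1) * Real.exp (-(c.re * t))) := by
      ring
    rw [this, ← Real.rpow_add hc, sub_add_sub_cancel', sub_self, Real.rpow_zero, one_mul]

lemma gammaC_value {a : ℂ} (ha : 0 < a.re) {c : ℂ} (hc : 0 < c.re) :
    ∫ t : ℝ in Ioi 0, (t : ℂ) ^ (a - 1) * Complex.exp (-(c * t))
      = Complex.Gamma a * c ^ (-a) := by
  set U : Set ℂ := {z | 0 < z.re} with hU
  have hUopen : IsOpen U := isOpen_lt continuous_const Complex.continuous_re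
  have hUconn : IsPreconnected U := (convex_halfSpace_re_gt 0).isPreconnected
  set F : ℂ → ℂ := fun z => ∫ t : ℝ in Ioi 0, (t : ℂ) ^ (a - 1) * Complex.exp (-(z * t)) with hF
  set G : ℂ → ℂ := fun z => Complex.Gamma a * z ^ (-a) with hG
  -- differentiability of F
  have hFdiff : ∀ z ∈ U, DifferentiableAt ℂ F z := by
    intro z hz
    have hz' : 0 < z.re := hz
    set ε : ℝ := z.re / 2 with hε
    have hεpos : 0 < ε := by positivity
    have bound_int : IntegrableOn (fun t : ℝ => t ^ (a.re + 1 - 1) * Real.exp (-(ε * t)))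
        (Ioi 0) := by
      have := gammaC_integrable (a := (a.re : ℂ) + 1) (by simp [ha.le]; positivity)
        (c := (ε : ℂ)) (by simpa using hεpos)
      refine (IntegrableOn.congr_fun this.norm (fun t ht => ?_) measurableSet_Ioi)
      rw [mem_Ioi] at ht
      rw [norm_mul, norm_cpow_eq_rpow_re_of_pos ht,
        Complex.norm_exp]
      norm_num [Complex.mul_re]
    have key := hasDerivAt_integral_of_dominated_loc_of_deriv_le (μ := volume.restrict (Ioi 0))
      (F := fun z (t : ℝ) => (t : ℂ) ^ (a - 1) * Complex.exp (-(z * t)))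
      (F' := fun z (t : ℝ) => (t : ℂ) ^ (a - 1) * (Complex.exp (-(z * t)) * -(t : ℂ)))
      (x₀ := z) (bound := fun t : ℝ => t ^ (a.re + 1 - 1) * Real.exp (-(ε * t)))
      (Metric.ball_mem_nhds z hεpos) ?_ ?_ ?_ ?_ ?_ ?_
    · exact key.2.differentiableAt
    · filter_upwards [hUopen.mem_nhds hz] with w hw
      exact (gammaC_integrable ha hw).aestronglyMeasurable
    · exact gammaC_integrable ha hz'
    · refine ((gammaC_integrable ha hz').aestronglyMeasurable.mul
        (Complex.continuous_ofReal.neg.aestronglyMeasurable)).congr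
        (Filter.Eventually.of_forall fun t => by simp [Pi.mul_apply]; ring)
    · filter_upwards [ae_restrict_mem measurableSet_Ioi] with t ht w hw
      rw [mem_Ioi] at ht
      rw [norm_mul, norm_mul, norm_neg,
        norm_cpow_eq_rpow_re_of_pos ht, Complex.norm_exp, Complex.norm_real, Real.norm_eq_abs,
        abs_of_pos ht, sub_re, one_re, ← mul_assoc]
      have hre : (-(w * t)).re = -(w.re * t) := by simp [Complex.mul_re]
      rw [hre]
      have hwre : ε ≤ w.re := by
        have := Complex.abs_re_le_norm (w - z)
        have hlt : ‖w - z‖ < ε := by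
          simpa [Metric.mem_ball, Complex.dist_eq] using hw
        have : |w.re - z.re| < ε := lt_of_le_of_lt (by simpa using this) hlt
        have := abs_lt.mp this
        linarith [this.1]
      have : Real.exp (-(w.re * t)) ≤ Real.exp (-(ε * t)) := by
        apply Real.exp_le_exp.mpr
        nlinarith
      calc t ^ (a.re - 1) * Real.exp (-(w.re * t)) * t
          ≤ t ^ (a.re - 1) * Real.exp (-(ε * t)) * t := by
            apply mul_le_mul_of_nonneg_right _ ht.le
            exact mul_le_mul_of_nonneg_left this (Real.rpow_nonneg ht.le _)
        _ = t ^ (a.re + 1 - 1) * Real.exp (-(ε * t)) := by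
            rw [show a.re + 1 - 1 = (a.re - 1) + 1 by ring, Real.rpow_add ht,
              Real.rpow_one]; ring
    · exact bound_int
    · filter_upwards [ae_restrict_mem measurableSet_Ioi] with t ht w hw
      have h1 : HasDerivAt (fun w : ℂ => -(w * (t : ℂ))) (-(t : ℂ)) w := by
        exact (((hasDerivAt_id w).mul_const (t : ℂ)).neg).congr_deriv (by simp)
      have h2 := h1.cexp
      exact (h2.const_mul ((t : ℂ) ^ (a - 1))).congr_deriv (by ring)
  -- differentiability of G
  have hGdiff : ∀ z ∈ U, DifferentiableAt ℂ G z := by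
    intro z hz
    refine (differentiableAt_id.cpow (differentiableAt_const _) ?_).const_mul _
    exact Or.inl hz
  have hFan : AnalyticOnNhd ℂ F U :=
    (DifferentiableOn.analyticOnNhd (fun z hz => (hFdiff z hz).differentiableWithinAt) hUopen)
  have hGan : AnalyticOnNhd ℂ G U :=
    (DifferentiableOn.analyticOnNhd (fun z hz => (hGdiff z hz).differentiableWithinAt) hUopen)
  have hreal : ∀ r : ℝ, 0 < r → F r = G r := by
    intro r hr
    have h1 := Complex.integral_cpow_mul_exp_neg_mul_Ioi ha hr
    show (∫ t : ℝ in Ioi 0, (t : ℂ) ^ (a - 1) * Complex.exp (-((r : ℂ) * t))) = _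
    rw [h1]
    show _ = Complex.Gamma a * (r : ℂ) ^ (-a)
    rw [one_div, inv_cpow _ _ (by rw [Complex.arg_ofReal_of_nonneg hr.le]; exact Real.pi_ne_zero.symm),
      ← Complex.cpow_neg]
    ring
  have h1U : (1 : ℂ) ∈ U := by simp [hU]
  have hfreq : ∃ᶠ z in nhdsWithin (1 : ℂ) {(1 : ℂ)}ᶜ, F z = G z := by
    have htend : Filter.Tendsto (fun n : ℕ => ((1 + ((n : ℝ) + 1)⁻¹ : ℝ) : ℂ)) Filter.atTop
        (nhdsWithin (1 : ℂ) {(1 : ℂ)}ᶜ) := by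
      apply tendsto_nhdsWithin_of_tendsto_nhds_of_eventually_within
      · have h0 : Filter.Tendsto (fun n : ℕ => (1 + ((n : ℝ) + 1)⁻¹ : ℝ)) Filter.atTop (nhds 1) := by
          have := tendsto_one_div_add_atTop_nhds_zero_nat (𝕜 := ℝ)
          simp only [one_div] at this
          simpa using tendsto_const_nhds.add this
        have h1 := (Complex.continuous_ofReal.tendsto (1 : ℝ)).comp h0
        rw [show ((1 : ℝ) : ℂ) = 1 by norm_num] at h1
        exact h1.congr (fun n => rfl)
      · filter_upwards with n
        simp only [Set.mem_compl_iff, Set.mem_singleton_iff]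
        intro h
        have h' : (1 + ((n : ℝ) + 1)⁻¹ : ℝ) = 1 := by exact_mod_cast h
        have hn : (0:ℝ) < ((n : ℝ) + 1)⁻¹ := by positivity
        linarith
    refine htend.frequently (Filter.Frequently.of_forall fun n => ?_)
    exact hreal _ (by positivity)
  have := hFan.eqOn_of_preconnected_of_frequently_eq hGan hUconn h1U hfreq
  exact this hc

lemma wre (σ y : ℝ) : ((σ : ℂ) + y * I).re = σ := by simp
lemma wim (σ y : ℝ) : ((σ : ℂ) + y * I).im = y := by simp

lemma wabs_ge {σ : ℝ} (hσ : 0 < σ) (y : ℝ) : σ ≤ ‖(σ : ℂ) + y * I‖ := by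
  have := Complex.abs_re_le_norm ((σ : ℂ) + y * I)
  rw [wre] at this
  exact le_trans (le_abs_self σ) this

lemma wne {σ : ℝ} (hσ : 0 < σ) (y : ℝ) : ((σ : ℂ) + y * I) ≠ 0 := by
  intro h
  have := wre σ y
  rw [h] at this
  simp at this
  linarith

lemma wslit {σ : ℝ} (hσ : 0 < σ) (y : ℝ) : ((σ : ℂ) + y * I) ∈ Complex.slitPlane :=
  Or.inl (by rw [wre]; exact hσ)

/-- norm bound for cpow on the vertical line -/
lemma norm_w_cpow_le {σ : ℝ} (hσ : 0 < σ) (y : ℝ) (s : ℂ) :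
    ‖((σ : ℂ) + y * I) ^ s‖ ≤
      ‖(σ : ℂ) + y * I‖ ^ s.re * Real.exp (π * |s.im|) := by
  rw [Complex.norm_cpow_of_ne_zero (wne hσ y)]
  rw [div_eq_mul_inv, ← Real.exp_neg]
  refine mul_le_mul_of_nonneg_left ?_ (Real.rpow_nonneg (norm_nonneg _) _)
  rw [Real.exp_le_exp]
  calc -(Complex.arg ((σ : ℂ) + y * I) * s.im) ≤ |Complex.arg ((σ : ℂ) + y * I) * s.im| :=
        neg_le_abs _
    _ = |Complex.arg ((σ : ℂ) + y * I)| * |s.im| := abs_mul _ _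
    _ ≤ π * |s.im| := mul_le_mul_of_nonneg_right (Complex.abs_arg_le_pi _) (abs_nonneg _)

/-- integrability of the majorant -/
lemma majorant_integrable {σ : ℝ} (hσ : 0 < σ) {a : ℝ} (ha : 1 < a) :
    Integrable (fun y : ℝ => ‖(σ : ℂ) + y * I‖ ^ (-a)) := by
  set c : ℝ := min σ 1 with hc
  have hcpos : 0 < c := lt_min hσ one_pos
  have hcle : c ≤ 1 := min_le_right _ _
  have hbig : Integrable (fun y : ℝ => (1 + ‖y‖) ^ (-a)) :=
    integrable_one_add_norm (by simpa using ha)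
  refine (hbig.const_mul ((c / 2) ^ (-a))).mono' ?_ ?_
  · refine (Continuous.rpow_const ?_ ?_).aestronglyMeasurable
    · exact continuous_norm.comp (by continuity)
    · intro y
      exact Or.inl (ne_of_gt (lt_of_lt_of_le hσ (wabs_ge hσ y)))
  · filter_upwards with y
    rw [Real.norm_eq_abs, _root_.abs_of_nonneg (Real.rpow_nonneg (norm_nonneg _) _)]
    have h1 : c / 2 * (1 + |y|) ≤ ‖(σ : ℂ) + y * I‖ := by
      have h2 : |y| = |((σ : ℂ) + y * I).im| := by rw [wim]
      have h3 : |y| ≤ ‖(σ : ℂ) + y * I‖ := by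
        rw [h2]; exact Complex.abs_im_le_norm _
      have h4 := wabs_ge hσ y
      have hcσ : c ≤ σ := min_le_left _ _
      nlinarith [norm_nonneg ((σ : ℂ) + y * I)]
    calc ‖(σ : ℂ) + y * I‖ ^ (-a) ≤ (c / 2 * (1 + |y|)) ^ (-a) :=
          Real.rpow_le_rpow_of_nonpos (by positivity) h1 (by linarith)
      _ = (c / 2) ^ (-a) * (1 + ‖y‖) ^ (-a) := by
          rw [Real.mul_rpow (by positivity) (by positivity), Real.norm_eq_abs]

lemma hankel {s : ℂ} (hs : 1 < s.re) {σ : ℝ} (hσ : 0 < σ) :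
    ∫ y : ℝ, ((σ : ℂ) + y * I) ^ (-s) * Complex.exp ((σ : ℂ) + y * I)
      = 2 * π / Complex.Gamma s := by
  have hs0 : 0 < s.re := lt_trans one_pos hs
  have hσ' : (0:ℝ) < ((σ : ℂ)).re := by simpa using hσ
  set g : ℝ → ℂ := fun x => (x : ℂ) ^ (s - 1) * Complex.exp (-((σ : ℂ) * x)) with hg
  set f : ℝ → ℂ := (Ioi (0:ℝ)).indicator g with hf
  have hfint : Integrable f := by
    rw [hf, integrable_indicator_iff measurableSet_Ioi]
    exact gammaC_integrable hs0 hσ'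
  -- compute the Fourier transform of f
  have hFour : ∀ ξ : ℝ, 𝓕 f ξ
      = Complex.Gamma s * ((σ : ℂ) + (2 * π * ξ : ℝ) * I) ^ (-s) := by
    intro ξ
    rw [Real.fourier_real_eq_integral_exp_smul]
    have hptw : ∀ v : ℝ, Complex.exp (↑(-2 * π * v * ξ) * I) • f v
        = (Ioi (0:ℝ)).indicator
            (fun v : ℝ => (v : ℂ) ^ (s - 1)
              * Complex.exp (-(((σ : ℂ) + (2 * π * ξ : ℝ) * I) * v))) v := by
      intro v
      rw [hf]
      by_cases hv : v ∈ Ioi (0:ℝ)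
      · rw [Set.indicator_of_mem hv, Set.indicator_of_mem hv, smul_eq_mul, hg]
        rw [show -(((σ : ℂ) + (2 * π * ξ : ℝ) * I) * v)
            = (↑(-2 * π * v * ξ) * I) + -((σ : ℂ) * v) by push_cast; ring, Complex.exp_add]
        ring
      · rw [Set.indicator_of_notMem hv, Set.indicator_of_notMem hv, smul_zero]
    rw [integral_congr_ae (Filter.Eventually.of_forall hptw), integral_indicator measurableSet_Ioi]
    exact gammaC_value hs0 (by rw [wre]; exact hσ)
  -- integrability of the Fourier transform
  have hmaj : Integrable (𝓕 f) := by
    have hbase : Integrable (fun y : ℝ => ‖(σ : ℂ) + y * I‖ ^ (-s.re)) :=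
      majorant_integrable hσ hs
    have hcomp : Integrable (fun ξ : ℝ =>
        ‖(σ : ℂ) + (2 * π * ξ : ℝ) * I‖ ^ (-s.re)) := by
      have := hbase.comp_mul_left' (R := 2 * π) (by positivity)
      simpa [mul_assoc] using this
    refine ((hcomp.const_mul (‖Complex.Gamma s‖ * Real.exp (π * |s.im|))).mono' ?_ ?_)
    · rw [funext hFour]
      refine (continuous_const.mul ?_).aestronglyMeasurable
      refine Continuous.cpow ?_ continuous_const (fun ξ => wslit hσ _)
      continuity
    · filter_upwards with ξ
      rw [hFour ξ, norm_mul]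
      have := norm_w_cpow_le hσ (2 * π * ξ) (-s)
      rw [neg_re, neg_im, abs_neg] at this
      calc ‖Complex.Gamma s‖ * ‖((σ : ℂ) + (2 * π * ξ : ℝ) * I) ^ (-s)‖
          ≤ ‖Complex.Gamma s‖ * (‖(σ : ℂ) + (2 * π * ξ : ℝ) * I‖ ^ (-s.re)
            * Real.exp (π * |s.im|)) := by
            exact mul_le_mul_of_nonneg_left this (norm_nonneg _)
        _ = ‖Complex.Gamma s‖ * Real.exp (π * |s.im|)
            * ‖(σ : ℂ) + (2 * π * ξ : ℝ) * I‖ ^ (-s.re) := by ring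
  -- continuity of f at 1
  have hcont : ContinuousAt f 1 := by
    have hev : f =ᶠ[nhds (1:ℝ)] g := by
      filter_upwards [isOpen_Ioi.mem_nhds (show (0:ℝ) < 1 by norm_num)] with x hx
      exact Set.indicator_of_mem hx g
    have hgc : ContinuousAt g 1 := by
      refine ContinuousAt.mul ?_ ?_
      · exact Complex.continuousAt_ofReal_cpow_const 1 (s - 1) (Or.inr one_ne_zero)
      · exact (Complex.continuous_exp.comp (by continuity)).continuousAt
    exact hgc.congr hev.symm
  -- Fourier inversion at the point 1
  have hinv := hfint.fourierInv_fourier_eq hmaj hcont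
  have hf1 : f 1 = Complex.exp (-(σ : ℂ)) := by
    rw [hf, Set.indicator_of_mem (by norm_num : (1:ℝ) ∈ Ioi (0:ℝ)), hg]
    norm_num
  set Φ : ℝ → ℂ := fun y => Complex.exp (↑y * I)
    * (Complex.Gamma s * ((σ : ℂ) + y * I) ^ (-s)) with hΦdef
  have hlhs : 𝓕⁻ (𝓕 f) 1 = ∫ ξ : ℝ, Φ (2 * π * ξ) := by
    rw [Real.fourierInv_eq_fourier_neg,
      Real.fourier_real_eq_integral_exp_smul]
    refine integral_congr_ae (Filter.Eventually.of_forall fun ξ => ?_)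
    show Complex.exp (↑(-2 * π * ξ * -1) * I) • 𝓕 f ξ = Φ (2 * π * ξ)
    rw [hFour ξ, smul_eq_mul, show (-2 * π * ξ * -1 : ℝ) = 2 * π * ξ by ring]
  have hcv : ∫ ξ : ℝ, Φ (2 * π * ξ) = ((2 * π)⁻¹ : ℝ) • ∫ y : ℝ, Φ y := by
    rw [MeasureTheory.Measure.integral_comp_mul_left Φ (2 * π)]
    congr 1
    rw [abs_of_pos (by positivity)]
  have hΦval : ∫ y : ℝ, Φ y = 2 * π * Complex.exp (-(σ : ℂ)) := by
    have h1 : Complex.exp (-(σ : ℂ)) = ((2 * π)⁻¹ : ℝ) • ∫ y : ℝ, Φ y := by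
      rw [← hcv, ← hlhs, hinv, hf1]
    rw [real_smul] at h1
    push_cast at h1
    rw [inv_mul_eq_div, eq_comm, div_eq_iff (by simp [Real.pi_ne_zero] : (2 * (π:ℂ)) ≠ 0)] at h1
    rw [h1]
    ring
  -- extract the integral
  have hΓ : Complex.Gamma s ≠ 0 := Complex.Gamma_ne_zero_of_re_pos hs0
  have hsplit : ∫ y : ℝ, Φ y = Complex.Gamma s
      * ∫ y : ℝ, Complex.exp (↑y * I) * ((σ : ℂ) + y * I) ^ (-s) := by
    rw [← integral_const_mul]
    exact integral_congr_ae (Filter.Eventually.of_forall fun y => by rw [hΦdef]; ring)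
  have hI : ∫ y : ℝ, Complex.exp (↑y * I) * ((σ : ℂ) + y * I) ^ (-s)
      = 2 * π * Complex.exp (-(σ : ℂ)) / Complex.Gamma s := by
    rw [eq_div_iff hΓ, mul_comm _ (Complex.Gamma s), ← hsplit, hΦval]
  calc ∫ y : ℝ, ((σ : ℂ) + y * I) ^ (-s) * Complex.exp ((σ : ℂ) + y * I)
      = ∫ y : ℝ, Complex.exp (σ : ℂ) * (Complex.exp (↑y * I) * ((σ : ℂ) + y * I) ^ (-s)) := by
        refine integral_congr_ae (Filter.Eventually.of_forall fun y => ?_)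
        show ((σ : ℂ) + y * I) ^ (-s) * Complex.exp ((σ : ℂ) + y * I)
          = Complex.exp (σ : ℂ) * (Complex.exp (↑y * I) * ((σ : ℂ) + y * I) ^ (-s))
        rw [Complex.exp_add]
        ring
    _ = Complex.exp (σ : ℂ) * (2 * π * Complex.exp (-(σ : ℂ)) / Complex.Gamma s) := by
        rw [integral_const_mul, hI]
    _ = 2 * π / Complex.Gamma s := by
        rw [mul_div_assoc']
        congr 1
        rw [show Complex.exp (σ:ℂ) * (2 * π * Complex.exp (-(σ:ℂ)))
            = (2 * π : ℂ) * (Complex.exp (σ:ℂ) * Complex.exp (-(σ:ℂ))) by ring,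
          ← Complex.exp_add]
        norm_num

/-- The function `L_ν(t) = Σ_{n≥0} tⁿ/(n! Γ(n+ν+1))`. -/
def Lf (ν t : ℂ) : ℂ := ∑' n : ℕ, t ^ n / ((n.factorial : ℂ) * Complex.Gamma ((n : ℂ) + ν + 1))

/-- **Proposition 2.** For every `ν ∈ ℂ` with `Re ν > 0`, every `t ∈ ℂ` and every real `σ > 0`,
the integral `(1/2πi) ∫_{σ-i∞}^{σ+i∞} w^{-ν-1} e^{w + t/w} dw` over the vertical line
`Re w = σ` (parametrized as `w = σ + iy`, `dw = i dy`) converges absolutely and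
equals `L_ν(t)`.  Here `w^{-ν-1} = e^{(-ν-1) log w}` with `Im (log w) ∈ (-π, π]`. -/
theorem besselL_vertical_line_integral (ν : ℂ) (hν : 0 < ν.re) (t : ℂ) (σ : ℝ) (hσ : 0 < σ) :
    Integrable (fun y : ℝ =>
        ((σ : ℂ) + y * I) ^ (-ν - 1) *
          Complex.exp (((σ : ℂ) + y * I) + t / ((σ : ℂ) + y * I))) ∧
    (2 * (π : ℂ) * I)⁻¹ *
        ∫ y : ℝ, ((σ : ℂ) + y * I) ^ (-ν - 1) *
          Complex.exp (((σ : ℂ) + y * I) + t / ((σ : ℂ) + y * I)) * I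
      = Lf ν t := by
  set w : ℝ → ℂ := fun y => (σ : ℂ) + y * I with hwdef
  have hwcont : Continuous w := by
    rw [hwdef]; continuity
  have hwpos : ∀ y, 0 < ‖w y‖ := fun y => lt_of_lt_of_le hσ (wabs_ge hσ y)
  set M : ℝ → ℝ := fun y => ‖w y‖ ^ (-(ν.re + 1)) with hMdef
  have hMint : Integrable M := majorant_integrable hσ (by linarith)
  have hMnonneg : ∀ y, 0 ≤ M y := fun y => Real.rpow_nonneg (norm_nonneg _) _
  -- each term
  set F : ℕ → ℝ → ℂ := fun n y => t ^ n / (n.factorial : ℂ)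
    * (w y ^ (-(ν + 1 + (n : ℂ))) * Complex.exp (w y)) with hFdef
  set K : ℕ → ℝ := fun n => (‖t‖ / σ) ^ n / (n.factorial : ℝ)
    * (Real.exp σ * Real.exp (π * |ν.im|)) with hKdef
  have hKnonneg : ∀ n, 0 ≤ K n := fun n => by
    rw [hKdef]; positivity
  -- pointwise bound
  have hbound : ∀ n y, ‖F n y‖ ≤ K n * M y := by
    intro n y
    rw [hFdef]
    have h1 : ‖t ^ n / (n.factorial : ℂ)‖ = ‖t‖ ^ n / (n.factorial : ℝ) := by
      rw [norm_div, norm_pow]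
      simp
    have h2 : ‖Complex.exp (w y)‖ = Real.exp σ := by
      rw [Complex.norm_exp, hwdef, wre]
    have h3 := norm_w_cpow_le hσ y (-(ν + 1 + (n : ℂ)))
    have hre : (-(ν + 1 + (n : ℂ))).re = -(ν.re + 1) + -(n : ℝ) := by simp; ring
    have him : |(-(ν + 1 + (n : ℂ))).im| = |ν.im| := by simp
    rw [hre, him] at h3
    have h4 : ‖w y‖ ^ (-(ν.re + 1) + -(n : ℝ))
        = M y * ‖w y‖ ^ (-(n : ℝ)) := by
      rw [Real.rpow_add (hwpos y), hMdef]
    have h5 : ‖w y‖ ^ (-(n : ℝ)) ≤ σ ^ (-(n : ℝ)) :=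
      Real.rpow_le_rpow_of_nonpos hσ (wabs_ge hσ y) (by simp)
    calc ‖t ^ n / (n.factorial : ℂ) * (w y ^ (-(ν + 1 + (n : ℂ))) * Complex.exp (w y))‖
        = (‖t‖ ^ n / (n.factorial : ℝ))
          * (‖w y ^ (-(ν + 1 + (n : ℂ)))‖ * Real.exp σ) := by
          rw [norm_mul, norm_mul, h1, h2]
      _ ≤ (‖t‖ ^ n / (n.factorial : ℝ))
          * ((M y * ‖w y‖ ^ (-(n : ℝ)) * Real.exp (π * |ν.im|)) * Real.exp σ) := by
          refine mul_le_mul_of_nonneg_left ?_ (by positivity)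
          refine mul_le_mul_of_nonneg_right ?_ (Real.exp_pos _).le
          rw [← h4]
          exact h3
      _ ≤ (‖t‖ ^ n / (n.factorial : ℝ))
          * ((M y * σ ^ (-(n : ℝ)) * Real.exp (π * |ν.im|)) * Real.exp σ) := by
          refine mul_le_mul_of_nonneg_left ?_ (by positivity)
          refine mul_le_mul_of_nonneg_right ?_ (Real.exp_pos _).le
          refine mul_le_mul_of_nonneg_right ?_ (Real.exp_pos _).le
          exact mul_le_mul_of_nonneg_left h5 (hMnonneg y)
      _ = K n * M y := by
          simp only [hKdef]
          have : σ ^ (-(n : ℝ)) = (σ ^ n)⁻¹ := by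
            rw [Real.rpow_neg hσ.le, Real.rpow_natCast]
          rw [this, div_pow]
          field_simp
  -- integrability of each term
  have hFcont : ∀ n, Continuous (F n) := by
    intro n
    rw [hFdef]
    refine continuous_const.mul (Continuous.mul ?_ (Complex.continuous_exp.comp hwcont))
    exact Continuous.cpow hwcont continuous_const (fun y => wslit hσ y)
  have hFint : ∀ n, Integrable (F n) := by
    intro n
    refine (hMint.const_mul (K n)).mono' (hFcont n).aestronglyMeasurable ?_
    filter_upwards with y
    exact hbound n y
  -- summability of integrals of norms
  have hsum : Summable fun n => ∫ y : ℝ, ‖F n y‖ := by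
    have hle : ∀ n : ℕ, (∫ y : ℝ, ‖F n y‖) ≤ K n * ∫ y, M y := by
      intro n
      calc ∫ y : ℝ, ‖F n y‖ ≤ ∫ y : ℝ, K n * M y :=
            integral_mono_of_nonneg (Filter.Eventually.of_forall fun y => norm_nonneg _)
              (hMint.const_mul (K n)) (Filter.Eventually.of_forall fun y => hbound n y)
        _ = K n * ∫ y, M y := integral_const_mul _ _
    refine Summable.of_nonneg_of_le (fun n => integral_nonneg fun y => norm_nonneg _) hle ?_
    have h1 : Summable fun n : ℕ => (‖t‖ / σ) ^ n / (n.factorial : ℝ) :=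
      Real.summable_pow_div_factorial _
    have := (h1.mul_right (Real.exp σ * Real.exp (π * |ν.im|))).mul_right (∫ y, M y)
    simpa [hKdef, mul_assoc] using this
  -- pointwise sum identity
  have hptsum : ∀ y : ℝ, w y ^ (-ν - 1) * Complex.exp (w y + t / w y) = ∑' n : ℕ, F n y := by
    intro y
    have hw := wne hσ y
    have hexp : Complex.exp (t / w y) = ∑' n : ℕ, (t / w y) ^ n / (n.factorial : ℂ) := by
      rw [Complex.exp_eq_exp_ℂ, NormedSpace.exp_eq_tsum_div]
    rw [Complex.exp_add, hexp, ← mul_assoc, ← tsum_mul_left]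
    refine tsum_congr fun n => ?_
    simp only [hFdef]
    have h1 : w y ^ (-(ν + 1 + (n : ℂ))) = w y ^ (-ν - 1) * ((w y) ^ n)⁻¹ := by
      rw [show -(ν + 1 + (n : ℂ)) = (-ν - 1) + -(n : ℂ) by ring,
        Complex.cpow_add _ _ hw, Complex.cpow_neg, Complex.cpow_natCast]
    rw [h1, div_pow]
    ring
  -- conjunct 1 : integrability
  have hmain : Integrable (fun y : ℝ => w y ^ (-ν - 1) * Complex.exp (w y + t / w y)) := by
    have hcont : Continuous (fun y : ℝ => w y ^ (-ν - 1) * Complex.exp (w y + t / w y)) := by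
      refine Continuous.mul (Continuous.cpow hwcont continuous_const (fun y => wslit hσ y)) ?_
      exact Complex.continuous_exp.comp (hwcont.add (continuous_const.div hwcont
        (fun y => wne hσ y)))
    refine (hMint.const_mul (Real.exp (π * |ν.im|) * Real.exp (σ + ‖t‖ / σ))).mono'
      hcont.aestronglyMeasurable ?_
    filter_upwards with y
    have h3 := norm_w_cpow_le hσ y (-ν - 1)
    have hre : (-ν - 1).re = -(ν.re + 1) := by simp; ring
    have him : |(-ν - 1).im| = |ν.im| := by simp
    rw [hre, him] at h3
    have h4 : ‖Complex.exp (w y + t / w y)‖ ≤ Real.exp (σ + ‖t‖ / σ) := by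
      rw [Complex.norm_exp, Real.exp_le_exp]
      have h5 : (w y + t / w y).re = σ + (t / w y).re := by
        rw [Complex.add_re, hwdef, wre]
      rw [h5]
      refine (add_le_add_iff_left σ).mpr ?_
      calc (t / w y).re ≤ ‖t / w y‖ := Complex.re_le_norm _
        _ = ‖t‖ / ‖w y‖ := norm_div _ _
        _ ≤ ‖t‖ / σ := by
            apply div_le_div_of_nonneg_left (norm_nonneg t) hσ (wabs_ge hσ y)
    calc ‖w y ^ (-ν - 1) * Complex.exp (w y + t / w y)‖
        ≤ (‖w y‖ ^ (-(ν.re + 1)) * Real.exp (π * |ν.im|))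
          * Real.exp (σ + ‖t‖ / σ) := by
          rw [norm_mul]
          exact mul_le_mul h3 h4 (norm_nonneg _) (by positivity)
      _ = Real.exp (π * |ν.im|) * Real.exp (σ + ‖t‖ / σ) * M y := by
          rw [hMdef]; ring
  refine ⟨hmain, ?_⟩
  -- conjunct 2 : the value
  have hval : ∀ n : ℕ, ∫ y : ℝ, F n y
      = t ^ n / (n.factorial : ℂ) * (2 * π / Complex.Gamma (ν + 1 + n)) := by
    intro n
    rw [hFdef]
    rw [integral_const_mul]
    congr 1
    have hs : 1 < (ν + 1 + (n : ℂ)).re := by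
      simp only [Complex.add_re, Complex.one_re, Complex.natCast_re]
      have : (0:ℝ) ≤ n := n.cast_nonneg
      linarith
    exact hankel hs hσ
  rw [integral_mul_const]
  have hrw : (fun y : ℝ => w y ^ (-ν - 1) * Complex.exp (w y + t / w y))
      = fun y : ℝ => ∑' n : ℕ, F n y := funext hptsum
  rw [show (∫ y : ℝ, w y ^ (-ν - 1) * Complex.exp (w y + t / w y))
      = ∫ y : ℝ, ∑' n : ℕ, F n y from congrArg _ hrw]
  rw [← MeasureTheory.integral_tsum_of_summable_integral_norm hFint hsum]
  rw [tsum_congr hval]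
  rw [Lf, ← tsum_mul_right, ← tsum_mul_left]
  refine tsum_congr fun n => ?_
  have hΓ : Complex.Gamma ((n : ℂ) + ν + 1) ≠ 0 := by
    refine Complex.Gamma_ne_zero_of_re_pos ?_
    simp only [Complex.add_re, Complex.one_re, Complex.natCast_re]
    have : (0:ℝ) ≤ n := n.cast_nonneg
    linarith
  have h2πI : (2 * (π : ℂ) * I) ≠ 0 := by
    simp [Real.pi_ne_zero, Complex.I_ne_zero]
  rw [show ν + 1 + (n : ℂ) = (n : ℂ) + ν + 1 by ring]
  have hfac : ((n.factorial : ℂ)) ≠ 0 := by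
    exact_mod_cast Nat.cast_ne_zero.mpr n.factorial_ne_zero
  field_simp
end
end

section
/- Let L ≠ 0 be an entire function given by a power series Σ_{n≥0} b_n·tⁿ with nonnegative real coefficients b_n, and let α′, α be real numbers with 0 < α′ < α. Then the function t ↦ L(tα′)/L(tα) is nonincreasing on (0, +∞) (in particular L(tα) > 0 for t > 0). Moreover, if L is not a polynomial (i.e. b_n ≠ 0 for infinitely many n), then L(tα′)/L(tα) → 0 as t → +∞. -/
set_option maxHeartbeats 1000000


open Filter

private lemma key_ineq0 (α' α s t : ℝ) (h1 : 0 < α') (h2 : α' ≤ α) (h3 : 0 < s) (h4 : s ≤ t)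
    (m k : ℕ) :
    (t*α')^m * (s*α)^(m+k) + (t*α')^(m+k) * (s*α)^m
      ≤ (s*α')^m * (t*α)^(m+k) + (s*α')^(m+k) * (t*α)^m := by
  have hA : (0:ℝ) ≤ α^k - α'^k := sub_nonneg.mpr (pow_le_pow_left₀ h1.le h2 k)
  have hC : (0:ℝ) ≤ t^k - s^k := sub_nonneg.mpr (pow_le_pow_left₀ h3.le h4 k)
  have hB : (0:ℝ) ≤ (α'*α)^m * (s*t)^m :=
    mul_nonneg (pow_nonneg (mul_nonneg h1.le (h1.trans_le h2).le) m)
      (pow_nonneg (mul_nonneg h3.le (h3.trans_le h4).le) m)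
  have hid : (s*α')^m * (t*α)^(m+k) + (s*α')^(m+k) * (t*α)^m
      - ((t*α')^m * (s*α)^(m+k) + (t*α')^(m+k) * (s*α)^m)
      = (α'*α)^m * (s*t)^m * ((α^k - α'^k) * (t^k - s^k)) := by
    ring
  nlinarith [mul_nonneg hB (mul_nonneg hA hC)]

private lemma key_ineq1 (α' α s t : ℝ) (h1 : 0 < α') (h2 : α' ≤ α) (h3 : 0 < s) (h4 : s ≤ t)
    (m n : ℕ) :
    (t*α')^m * (s*α)^n + (t*α')^n * (s*α)^m
      ≤ (s*α')^m * (t*α)^n + (s*α')^n * (t*α)^m := by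
  rcases le_total m n with h | h
  · obtain ⟨k, rfl⟩ := Nat.exists_eq_add_of_le h
    exact key_ineq0 α' α s t h1 h2 h3 h4 m k
  · obtain ⟨k, rfl⟩ := Nat.exists_eq_add_of_le h
    have := key_ineq0 α' α s t h1 h2 h3 h4 n k
    linarith

/-- **Lemma 3.** Let `L ≠ 0` be an entire function given by a power series `Σ bₙ tⁿ` with
nonnegative real coefficients (the series converging on all of `ℝ`, as the restriction to the
real axis of an entire function), and let `0 < α′ < α`. Then `t ↦ L(tα′)/L(tα)` is
nonincreasing on `(0, ∞)` (in particular `L(tα) > 0` for `t > 0`), and if `L` is not a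
polynomial then `L(tα′)/L(tα) → 0` as `t → +∞`. -/
theorem lemma3_power_series_ratio
    (b : ℕ → ℝ) (hb : ∀ n, 0 ≤ b n) (hne : ∃ n, b n ≠ 0)
    (L : ℝ → ℝ) (hL : ∀ t : ℝ, HasSum (fun n : ℕ => b n * t ^ n) (L t))
    (α' α : ℝ) (hα' : 0 < α') (hαα : α' < α) :
    (AntitoneOn (fun t : ℝ => L (t * α') / L (t * α)) (Set.Ioi 0)) ∧
    (∀ t : ℝ, 0 < t → 0 < L (t * α)) ∧
    ({n : ℕ | b n ≠ 0}.Infinite →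
      Tendsto (fun t : ℝ => L (t * α') / L (t * α)) atTop (nhds 0)) := by
  have hα : 0 < α := hα'.trans hαα
  -- positivity of L at positive points
  have hpos : ∀ x : ℝ, 0 < x → 0 < L x := by
    intro x hx
    obtain ⟨m, hm⟩ := hne
    have h1 : b m * x ^ m ≤ L x :=
      le_hasSum (hL x) m (fun n _ => mul_nonneg (hb n) (pow_nonneg hx.le n))
    have h2 : 0 < b m * x ^ m := by
      have := (hb m).lt_of_ne (Ne.symm hm)
      positivity
    linarith
  -- norm-summability
  have hnorm : ∀ x : ℝ, Summable fun n : ℕ => ‖b n * x ^ n‖ := by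
    intro x
    simp only [Real.norm_eq_abs]
    exact summable_abs_iff.mpr (hL x).summable
  -- the key product inequality
  have hprod : ∀ s t : ℝ, 0 < s → s ≤ t →
      L (t * α') * L (s * α) ≤ L (s * α') * L (t * α) := by
    intro s t hs hst
    set F : ℕ × ℕ → ℝ := fun p => (b p.1 * (t*α')^p.1) * (b p.2 * (s*α)^p.2) with hF
    set G : ℕ × ℕ → ℝ := fun p => (b p.1 * (s*α')^p.1) * (b p.2 * (t*α)^p.2) with hG
    have hFs : Summable F := summable_mul_of_summable_norm
      (f := fun n : ℕ => b n * (t*α')^n) (g := fun n : ℕ => b n * (s*α)^n)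
      (hnorm _) (hnorm _)
    have hGs : Summable G := summable_mul_of_summable_norm
      (f := fun n : ℕ => b n * (s*α')^n) (g := fun n : ℕ => b n * (t*α)^n)
      (hnorm _) (hnorm _)
    have hFs' : Summable (fun p : ℕ × ℕ => F p.swap) := hFs.prod_symm
    have hGs' : Summable (fun p : ℕ × ℕ => G p.swap) := hGs.prod_symm
    have hpair : ∀ p : ℕ × ℕ, F p + F p.swap ≤ G p + G p.swap := by
      rintro ⟨m, n⟩
      have hbmn : 0 ≤ b m * b n := mul_nonneg (hb m) (hb n)
      have key := mul_le_mul_of_nonneg_left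
        (key_ineq1 α' α s t hα' hαα.le hs hst m n) hbmn
      have e1 : F (m, n) + F (m, n).swap
          = b m * b n * ((t*α')^m * (s*α)^n + (t*α')^n * (s*α)^m) := by
        simp only [hF, Prod.swap]; ring
      have e2 : G (m, n) + G (m, n).swap
          = b m * b n * ((s*α')^m * (t*α)^n + (s*α')^n * (t*α)^m) := by
        simp only [hG, Prod.swap]; ring
      rw [e1, e2]; exact key
    have hswapF : (∑' p : ℕ × ℕ, F p.swap) = ∑' p, F p :=
      (Equiv.prodComm ℕ ℕ).tsum_eq F
    have hswapG : (∑' p : ℕ × ℕ, G p.swap) = ∑' p, G p :=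
      (Equiv.prodComm ℕ ℕ).tsum_eq G
    have h2 : (∑' p, F p) + (∑' p, F p) ≤ (∑' p, G p) + (∑' p, G p) := by
      have := Summable.tsum_le_tsum hpair (hFs.add hFs') (hGs.add hGs')
      rwa [Summable.tsum_add hFs hFs', Summable.tsum_add hGs hGs', hswapF, hswapG] at this
    have eF : L (t * α') * L (s * α) = ∑' p, F p := by
      rw [← (hL (t*α')).tsum_eq, ← (hL (s*α)).tsum_eq]
      exact tsum_mul_tsum_of_summable_norm
        (f := fun n : ℕ => b n * (t*α')^n) (g := fun n : ℕ => b n * (s*α)^n)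
        (hnorm _) (hnorm _)
    have eG : L (s * α') * L (t * α) = ∑' p, G p := by
      rw [← (hL (s*α')).tsum_eq, ← (hL (t*α)).tsum_eq]
      exact tsum_mul_tsum_of_summable_norm
        (f := fun n : ℕ => b n * (s*α')^n) (g := fun n : ℕ => b n * (t*α)^n)
        (hnorm _) (hnorm _)
    rw [eF, eG]; linarith
  have hanti : AntitoneOn (fun t : ℝ => L (t * α') / L (t * α)) (Set.Ioi 0) := by
    intro s hs t ht hst
    simp only
    rw [div_le_div_iff₀ (hpos _ (mul_pos ht hα)) (hpos _ (mul_pos hs hα))]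
    exact hprod s t hs hst
  refine ⟨hanti, fun t ht => hpos _ (mul_pos ht hα), ?_⟩
  -- the limit part
  intro hinf
  rw [NormedAddCommGroup.tendsto_nhds_zero]
  intro ε hε
  set r : ℝ := α' / α with hr
  have hr0 : 0 ≤ r := div_nonneg hα'.le hα.le
  have hr1 : r < 1 := (div_lt_one hα).mpr hαα
  obtain ⟨N, hN⟩ := ((tendsto_pow_atTop_nhds_zero_of_lt_one hr0 hr1).eventually
    (gt_mem_nhds (by linarith : (0:ℝ) < ε/2))).exists
  obtain ⟨M, hbM, hMN⟩ := hinf.exists_gt N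
  have hbM' : 0 < b M := (hb M).lt_of_ne (Ne.symm hbM)
  -- upper bound for the ratio
  have hbound : ∀ t : ℝ, 0 < t →
      L (t * α') / L (t * α) ≤
        (∑ n ∈ Finset.range N, b n * α'^n * t^n / (b M * α^M * t^M)) + r ^ N := by
    intro t ht
    have hLα : 0 < L (t * α) := hpos _ (mul_pos ht hα)
    -- L(tα') ≤ Σ_{n<N} bₙ(tα')ⁿ + r^N L(tα)
    have hsplit : ∑ n ∈ Finset.range N, b n * (t*α')^n
        + ∑' i : ℕ, b (i+N) * (t*α')^(i+N) = L (t*α') := by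
      rw [← (hL (t*α')).tsum_eq]
      exact Summable.sum_add_tsum_nat_add N (hL (t*α')).summable
    have hsplit' : ∑ n ∈ Finset.range N, b n * (t*α)^n
        + ∑' i : ℕ, b (i+N) * (t*α)^(i+N) = L (t*α) := by
      rw [← (hL (t*α)).tsum_eq]
      exact Summable.sum_add_tsum_nat_add N (hL (t*α)).summable
    have htail : (∑' i : ℕ, b (i+N) * (t*α')^(i+N))
        ≤ r ^ N * ∑' i : ℕ, b (i+N) * (t*α)^(i+N) := by
      rw [← tsum_mul_left]
      refine Summable.tsum_le_tsum (fun i => ?_)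
        ((summable_nat_add_iff N).mpr (hL (t*α')).summable)
        (((summable_nat_add_iff N).mpr (hL (t*α)).summable).mul_left _)
      have h1 : (t*α')^(i+N) = r^(i+N) * (t*α)^(i+N) := by
        rw [hr, ← mul_pow, div_mul_eq_mul_div, mul_div_assoc, mul_div_cancel_right₀ _ hα.ne', mul_comm]
      have h2 : r^(i+N) ≤ r^N := pow_le_pow_of_le_one hr0 hr1.le (by omega)
      rw [h1]
      calc b (i+N) * (r^(i+N) * (t*α)^(i+N))
          ≤ b (i+N) * (r^N * (t*α)^(i+N)) := by
            apply mul_le_mul_of_nonneg_left _ (hb _)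
            exact mul_le_mul_of_nonneg_right h2 (by positivity)
        _ = r^N * (b (i+N) * (t*α)^(i+N)) := by ring
    have htail' : (∑' i : ℕ, b (i+N) * (t*α)^(i+N)) ≤ L (t*α) := by
      rw [← hsplit']
      have : 0 ≤ ∑ n ∈ Finset.range N, b n * (t*α)^n :=
        Finset.sum_nonneg fun n _ => mul_nonneg (hb n) (by positivity)
      linarith
    have hupper : L (t*α') ≤ (∑ n ∈ Finset.range N, b n * (t*α')^n) + r^N * L (t*α) := by
      rw [← hsplit]
      have := mul_le_mul_of_nonneg_left htail' (pow_nonneg hr0 N)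
      linarith
    -- L(tα) ≥ b_M (tα)^M
    have hlow : b M * (t*α)^M ≤ L (t*α) :=
      le_hasSum (hL (t*α)) M (fun n _ => mul_nonneg (hb n) (by positivity))
    have hlow0 : 0 < b M * (t*α)^M := by positivity
    calc L (t * α') / L (t * α)
        ≤ ((∑ n ∈ Finset.range N, b n * (t*α')^n) + r^N * L (t*α)) / L (t*α) := by
          gcongr
      _ = (∑ n ∈ Finset.range N, b n * (t*α')^n) / L (t*α) + r^N := by
          field_simp
      _ ≤ (∑ n ∈ Finset.range N, b n * (t*α')^n) / (b M * (t*α)^M) + r^N := by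
          gcongr
          · exact Finset.sum_nonneg fun n _ => mul_nonneg (hb n) (by positivity)
      _ = (∑ n ∈ Finset.range N, b n * α'^n * t^n / (b M * α^M * t^M)) + r ^ N := by
          rw [Finset.sum_div]
          congr 1
          refine Finset.sum_congr rfl fun n _ => ?_
          rw [mul_pow, mul_pow]
          ring
  -- the bound tends to r^N < ε/2 + something
  have htendsto : Tendsto (fun t : ℝ =>
      (∑ n ∈ Finset.range N, b n * α'^n * t^n / (b M * α^M * t^M)) + r ^ N)
      atTop (nhds (0 + r ^ N)) := by
    apply Tendsto.add _ tendsto_const_nhds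
    have : (0:ℝ) = ∑ n ∈ Finset.range N, (0:ℝ) := by simp
    rw [this]
    apply tendsto_finset_sum
    intro n hn
    have hnM : n < M := (Finset.mem_range.mp hn).trans hMN
    have : Tendsto (fun t : ℝ => (b n * α'^n / (b M * α^M)) * (t^n / t^M))
        atTop (nhds ((b n * α'^n / (b M * α^M)) * 0)) :=
      (tendsto_pow_div_pow_atTop_zero hnM).const_mul _
    simp only [mul_zero] at this
    refine this.congr' ?_
    filter_upwards [eventually_gt_atTop (0:ℝ)] with t ht
    field_simp
  rw [zero_add] at htendsto
  have hev : ∀ᶠ t : ℝ in atTop,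
      (∑ n ∈ Finset.range N, b n * α'^n * t^n / (b M * α^M * t^M)) + r ^ N < ε := by
    have := htendsto.eventually (gt_mem_nhds (show r ^ N < ε by linarith))
    exact this
  filter_upwards [hev, eventually_gt_atTop (0:ℝ)] with t htε ht
  have h0 : 0 ≤ L (t * α') / L (t * α) :=
    div_nonneg (hpos _ (mul_pos ht hα')).le (hpos _ (mul_pos ht hα)).le
  rw [Real.norm_eq_abs, abs_of_nonneg h0]
  exact lt_of_le_of_lt (hbound t ht) htε
end

section
/- Let N ≥ 1 be an integer, γ = (a b; c d) ∈ SL₂(ℤ) with 0 < c ≤ N, and x = a/c. Let n and m be the largest integers with d + nc ≤ N and −d + mc ≤ N respectively, and set a′ = b + na, c′ = d + nc, a′′ = −b + ma, c′′ = −d + mc. Then 1 ≤ c′ ≤ N, 1 ≤ c′′ ≤ N, c + c′ ≥ N + 1 and c + c′′ ≥ N + 1, and: (a) a′/c′ is the predecessor of x in Q_N (the largest element of Q_N smaller than x) and a′′/c′′ is the successor of x in Q_N (the smallest element of Q_N larger than x); (b) the Ford circles C_{a′/c′} and C_x are tangent at the point R = (ac + a′c′ + i)/(c² + c′²) = (a′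 + ia)/(c′ + ic), and C_x and C_{a′′/c′′} are tangent at the point S = (ac + a′′c′′ + i)/(c² + c′′²) = (a′′ − ia)/(c′′ − ic); in particular R lies on both circles C_{a′/c′} and C_x, and S lies on both C_x and C_{a′′/c′′}; (c) the imaginary parts of R and of S lie in the interval [1/(2N²), 2/(N+1)²]; (d) γ·(n + i) = R and γ·(−m + i) = S, where γ·z = (az+b)/(cz+d), and the image of the segment [n+i, −m+i] under z ↦ γ·z is the arc of C_x from R to S traversed clockwise. -/
open Complex Real

noncomputable section

abbrev SL2Z := Matrix.SpecialLinearGroup (Fin 2) ℤ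

/-- Möbius action of `SL₂(ℤ)` on `ℂ`. -/
def moeb (γ : SL2Z) (z : ℂ) : ℂ :=
  ((γ 0 0 : ℤ) * z + (γ 0 1 : ℤ)) / ((γ 1 0 : ℤ) * z + (γ 1 1 : ℤ))

/-- `Q_N`: the set of rational numbers whose denominator (in irreducible form) is `≤ N`. -/
def QN (N : ℕ) : Set ℚ := {q : ℚ | q.den ≤ N}

/-- The Ford circle `C_q`: the circle of radius `1/(2 den(q)²)` tangent to the real axis
at `q`, i.e. with center `q + i/(2 den(q)²)`. -/
def FordC (q : ℚ) : Set ℂ :=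
  {z : ℂ | ‖z - ((q : ℂ) + I / (2 * ((q.den : ℂ)) ^ 2))‖ = 1 / (2 * ((q.den : ℝ)) ^ 2)}

/-! ### Auxiliary lemmas -/

section Aux

lemma sqrt_one_add_div_sq (v c : ℝ) (hc : 0 < c) :
    Real.sqrt (1 + (v/c)^2) = Real.sqrt (v^2+c^2) / c := by
  rw [show 1 + (v/c)^2 = (v^2+c^2)/c^2 by field_simp; ring, Real.sqrt_div (by positivity),
    Real.sqrt_sq hc.le]

lemma cos_sin_polar (v c : ℝ) (hc : 0 < c) :
    Real.sqrt (v^2+c^2) * Real.cos (π/2 - Real.arctan (v/c)) = v ∧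
    Real.sqrt (v^2+c^2) * Real.sin (π/2 - Real.arctan (v/c)) = c := by
  have hp : 0 < Real.sqrt (v^2+c^2) := Real.sqrt_pos.mpr (by positivity)
  constructor
  · rw [Real.cos_pi_div_two_sub, Real.sin_arctan, sqrt_one_add_div_sq v c hc]
    field_simp
  · rw [Real.sin_pi_div_two_sub, Real.cos_arctan, sqrt_one_add_div_sq v c hc]
    field_simp

lemma exp_real_mul_I (θ : ℝ) (r : ℝ) :
    (r : ℂ) * Complex.exp ((θ : ℂ) * I) =
      ((r * Real.cos θ : ℝ) : ℂ) + ((r * Real.sin θ : ℝ) : ℂ) * I := by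
  rw [Complex.exp_mul_I, ← Complex.ofReal_cos, ← Complex.ofReal_sin]
  push_cast; ring

lemma polar_aux (v c : ℝ) (hc : 0 < c) :
    (v : ℂ) + (c : ℝ) * I = (Real.sqrt (v^2 + c^2) : ℝ) * Complex.exp ((↑(π/2 - Real.arctan (v/c)) : ℂ) * I) := by
  obtain ⟨h1, h2⟩ := cos_sin_polar v c hc
  rw [exp_real_mul_I, h1, h2]

lemma polar_aux' (v c : ℝ) (hc : 0 < c) :
    (v : ℂ) - (c : ℝ) * I = (Real.sqrt (v^2 + c^2) : ℝ) * Complex.exp ((↑(-(π/2 - Real.arctan (v/c))) : ℂ) * I) := by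
  obtain ⟨h1, h2⟩ := cos_sin_polar v c hc
  rw [exp_real_mul_I, Real.cos_neg, Real.sin_neg, h1]
  rw [show Real.sqrt (v^2+c^2) * -Real.sin (π/2 - Real.arctan (v/c))
      = -(Real.sqrt (v^2+c^2) * Real.sin (π/2 - Real.arctan (v/c))) by ring, h2]
  push_cast; ring

lemma neg_I_eq : (-I) = Complex.exp ((↑(-(π/2)) : ℂ) * I) := by
  rw [Complex.exp_mul_I, ← Complex.ofReal_cos, ← Complex.ofReal_sin]
  simp

lemma line_ne_zero (v c : ℝ) (hc : c ≠ 0) : ((v:ℝ):ℂ) + ((c:ℝ):ℂ)*I ≠ 0 := by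
  intro h
  have := congrArg Complex.im h
  simp at this
  exact hc this

lemma step2' (v c : ℝ) (hc : 0 < c) :
    (-(c:ℂ) - ((v:ℝ):ℂ)*I)/(2*(c:ℂ)^2*(((v:ℝ):ℂ) + ((c:ℝ):ℂ)*I))
      = 1/(2*(c:ℂ)^2) * Complex.exp ((↑(2*Real.arctan (v/c) - 3*π/2) : ℂ) * I) := by
  have hcC : (c:ℂ) ≠ 0 := by exact_mod_cast hc.ne'
  have h2c : (2*(c:ℂ)^2) ≠ 0 := mul_ne_zero two_ne_zero (pow_ne_zero 2 hcC)
  have hr : (0:ℝ) < Real.sqrt (v^2+c^2) := Real.sqrt_pos.mpr (by positivity)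
  have hrC : ((Real.sqrt (v^2+c^2) : ℝ):ℂ) ≠ 0 := by exact_mod_cast hr.ne'
  have hEq : Complex.exp ((↑(-(π/2)) : ℂ)*I) * Complex.exp ((↑(-(π/2 - Real.arctan (v/c))) : ℂ)*I)
      = Complex.exp ((↑(2*Real.arctan (v/c) - 3*π/2) : ℂ)*I) * Complex.exp ((↑(π/2 - Real.arctan (v/c)) : ℂ)*I) := by
    rw [← Complex.exp_add, ← Complex.exp_add]
    congr 1
    push_cast
    ring
  have hnum : (-(c:ℂ) - ((v:ℝ):ℂ)*I) = (-I) * (((v:ℝ):ℂ) - ((c:ℝ):ℂ)*I) := by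
    linear_combination (-(c:ℂ)) * Complex.I_sq
  rw [hnum, polar_aux v c hc, polar_aux' v c hc, neg_I_eq, one_div, inv_mul_eq_div,
    div_eq_div_iff (mul_ne_zero h2c (mul_ne_zero hrC (Complex.exp_ne_zero _))) h2c]
  linear_combination (2*(c:ℂ)^2 * ((Real.sqrt (v^2+c^2) : ℝ):ℂ)) * hEq

lemma frac_split (x w : ℂ) (c : ℝ) (hw : w ≠ 0) (hc : (c:ℂ) ≠ 0) :
    (x * w - 1/(c:ℂ))/w = x + I/(2*(c:ℂ)^2) + (-2*(c:ℂ) - w*I)/(2*(c:ℂ)^2*w) := by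
  have h2c : (2*(c:ℂ)^2) ≠ 0 := mul_ne_zero two_ne_zero (pow_ne_zero 2 hc)
  have key : I/(2*(c:ℂ)^2) + (-2*(c:ℂ) - w*I)/(2*(c:ℂ)^2*w) = (-1)/((c:ℂ)*w) := by
    rw [div_add_div _ _ h2c (mul_ne_zero h2c hw),
      div_eq_div_iff (mul_ne_zero h2c (mul_ne_zero h2c hw)) (mul_ne_zero hc hw)]
    ring
  rw [sub_div, mul_div_cancel_right₀ _ hw, div_div, add_assoc, key]
  ring

lemma step1' (a b c d u : ℝ) (hc : 0 < c) (hdet : a*d - b*c = 1) :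
    ((a:ℂ)*((u:ℝ)+I) + (b:ℂ)) / ((c:ℂ)*((u:ℝ)+I) + (d:ℂ))
      = ((a/c : ℝ):ℂ) + I/(2*(c:ℂ)^2)
        + (-(c:ℂ) - ((c*u+d:ℝ):ℂ)*I)/(2*(c:ℂ)^2*(((c*u+d:ℝ):ℂ) + ((c:ℝ):ℂ)*I)) := by
  have hcC : (c:ℂ) ≠ 0 := by exact_mod_cast hc.ne'
  have hwne' : ((c*u+d:ℝ):ℂ) + ((c:ℝ):ℂ)*I ≠ 0 := line_ne_zero _ _ hc.ne'
  have hw : (c:ℂ)*((u:ℝ)+I) + (d:ℂ) = ((c*u+d:ℝ):ℂ) + ((c:ℝ):ℂ)*I := by push_cast; ring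
  have hwne : (c:ℂ)*((u:ℝ)+I) + (d:ℂ) ≠ 0 := by rw [hw]; exact hwne'
  have hb2 : (b:ℂ) = ((a:ℂ)*(d:ℂ) - 1)/(c:ℂ) := by
    rw [eq_div_iff hcC]
    have hdetC : (a:ℂ)*d - b*c = 1 := by exact_mod_cast hdet
    linear_combination -hdetC
  have m1 : ((a:ℂ)*((u:ℝ)+I) + (b:ℂ))
      = ((a/c : ℝ):ℂ) * ((c:ℂ)*((u:ℝ)+I) + (d:ℂ)) - 1/(c:ℂ) := by
    rw [hb2]
    push_cast
    field_simp
    ring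
  have hnum2 : (-2*(c:ℂ) - ((c:ℂ)*((u:ℝ)+I) + (d:ℂ))*I) = (-(c:ℂ) - ((c*u+d:ℝ):ℂ)*I) := by
    push_cast
    linear_combination (-(c:ℂ)) * Complex.I_sq
  rw [m1, frac_split _ _ c hwne hcC, hnum2, hw]

lemma moeb_on_line (a b c d u : ℝ) (hc : 0 < c) (hdet : a*d - b*c = 1) :
    ((a:ℂ)*((u:ℝ)+I) + (b:ℂ)) / ((c:ℂ)*((u:ℝ)+I) + (d:ℂ))
      = ((a/c : ℝ) : ℂ) + I/(2*(c:ℂ)^2)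
        + (1/(2*(c:ℂ)^2)) * Complex.exp ((↑(2*Real.arctan ((c*u+d)/c) - 3*π/2) : ℂ) * I) := by
  rw [step1' a b c d u hc hdet, step2' (c*u+d) c hc]

lemma tangent_unique {O1 O2 z R : ℂ} {r1 r2 : ℝ} (h1 : 0 < r1)
    (hd : dist O1 O2 = r1 + r2) (hR1 : dist O1 R = r1) (hR2 : dist R O2 = r2)
    (hz1 : dist O1 z = r1) (hz2 : dist z O2 = r2) : z = R := by
  have hr2 : 0 ≤ r2 := hR2 ▸ dist_nonneg
  have hsum : (0:ℝ) < r1 + r2 := by linarith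
  have hzw : Wbtw ℝ O1 z O2 := dist_add_dist_eq_iff.mp (by rw [hz1, hz2, hd])
  have hRw : Wbtw ℝ O1 R O2 := dist_add_dist_eq_iff.mp (by rw [hR1, hR2, hd])
  rw [← mem_segment_iff_wbtw, segment_eq_image' ℝ] at hzw hRw
  obtain ⟨t, ht, hzt⟩ := hzw
  obtain ⟨s, hs, hRs⟩ := hRw
  have hnorm : ‖O2 - O1‖ = r1 + r2 := by rw [← dist_eq_norm', hd]
  have ht' : t * (r1+r2) = r1 := by
    rw [← hzt] at hz1
    rw [dist_self_add_right, norm_smul, Real.norm_eq_abs, _root_.abs_of_nonneg ht.1, hnorm] at hz1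
    exact hz1
  have hs' : s * (r1+r2) = r1 := by
    rw [← hRs] at hR1
    rw [dist_self_add_right, norm_smul, Real.norm_eq_abs, _root_.abs_of_nonneg hs.1, hnorm] at hR1
    exact hR1
  have hts : t = s := mul_right_cancel₀ hsum.ne' (ht'.trans hs'.symm)
  rw [← hzt, ← hRs, hts]

lemma line_ne' (x y : ℤ) (hy : y ≠ 0) : (x:ℂ) + I*(y:ℂ) ≠ 0 := by
  intro h
  have := congrArg Complex.im h
  simp at this
  exact hy (by exact_mod_cast this)

lemma ford_tangent (a c a' c' : ℤ) (hc : 0 < c) (hc' : 0 < c')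
    (hdet : a*c' - a'*c = 1) :
    FordC ((a':ℚ)/(c':ℚ)) ∩ FordC ((a:ℚ)/(c:ℚ))
      = {((a':ℂ) + I*(a:ℂ))/((c':ℂ) + I*(c:ℂ))} := by
  have hcop' : Int.gcd a' c' = 1 := Int.isCoprime_iff_gcd_eq_one.mp ⟨-c, a, by linear_combination hdet⟩
  have hcop : Int.gcd a c = 1 := Int.isCoprime_iff_gcd_eq_one.mp ⟨c', -a', by linear_combination hdet⟩
  have hden' : ((((a':ℚ)/(c':ℚ)).den : ℤ)) = c' := Rat.den_div_eq_of_coprime hc' hcop'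
  have hden : ((((a:ℚ)/(c:ℚ)).den : ℤ)) = c := Rat.den_div_eq_of_coprime hc hcop
  have hcR : (0:ℝ) < (c:ℝ) := by exact_mod_cast hc
  have hc'R : (0:ℝ) < (c':ℝ) := by exact_mod_cast hc'
  have hcC : ((c:ℤ):ℂ) ≠ 0 := by exact_mod_cast hc.ne'
  have hc'C : ((c':ℤ):ℂ) ≠ 0 := by exact_mod_cast hc'.ne'
  have hne : ((c':ℤ):ℂ) + I*((c:ℤ):ℂ) ≠ 0 := line_ne' c' c hc.ne'
  have hdR : (a:ℝ)*(c':ℝ) - (a':ℝ)*(c:ℝ) = 1 := by exact_mod_cast hdet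
  have hdC : ((a:ℤ):ℂ)*((c':ℤ):ℂ) - ((a':ℤ):ℂ)*((c:ℤ):ℂ) = 1 := by exact_mod_cast hdet
  set O1 : ℂ := ((a':ℤ):ℂ)/((c':ℤ):ℂ) + I/(2*((c':ℤ):ℂ)^2) with hO1
  set O2 : ℂ := ((a:ℤ):ℂ)/((c:ℤ):ℂ) + I/(2*((c:ℤ):ℂ)^2) with hO2
  set Rp : ℂ := (((a':ℤ):ℂ) + I*((a:ℤ):ℂ))/(((c':ℤ):ℂ) + I*((c:ℤ):ℂ)) with hRp
  have hmem' : ∀ z : ℂ, z ∈ FordC ((a':ℚ)/(c':ℚ)) ↔ ‖z - O1‖ = 1/(2*((c':ℝ))^2) := by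
    intro z
    have h1 : ((((a':ℚ)/(c':ℚ)).den : ℂ)) = ((c':ℤ):ℂ) := by exact_mod_cast hden'
    have h2 : ((((a':ℚ)/(c':ℚ)).den : ℝ)) = ((c':ℤ):ℝ) := by exact_mod_cast hden'
    have h3 : (((a':ℚ)/(c':ℚ) : ℚ) : ℂ) = ((a':ℤ):ℂ)/((c':ℤ):ℂ) := by push_cast; ring
    simp only [FordC, Set.mem_setOf_eq, h1, h2, h3, hO1]
  have hmem : ∀ z : ℂ, z ∈ FordC ((a:ℚ)/(c:ℚ)) ↔ ‖z - O2‖ = 1/(2*((c:ℝ))^2) := by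
    intro z
    have h1 : ((((a:ℚ)/(c:ℚ)).den : ℂ)) = ((c:ℤ):ℂ) := by exact_mod_cast hden
    have h2 : ((((a:ℚ)/(c:ℚ)).den : ℝ)) = ((c:ℤ):ℝ) := by exact_mod_cast hden
    have h3 : (((a:ℚ)/(c:ℚ) : ℚ) : ℂ) = ((a:ℤ):ℂ)/((c:ℤ):ℂ) := by push_cast; ring
    simp only [FordC, Set.mem_setOf_eq, h1, h2, h3, hO2]
  have hdist : dist O1 O2 = 1/(2*((c':ℝ))^2) + 1/(2*((c:ℝ))^2) := by
    have hx : ((a':ℝ)/(c':ℝ) - (a:ℝ)/(c:ℝ)) = -1/((c:ℝ)*(c':ℝ)) := by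
      rw [div_sub_div _ _ hc'R.ne' hcR.ne', div_eq_div_iff (by positivity) (by positivity)]
      linear_combination (-(c:ℝ)*(c':ℝ)) * hdR
    have hsub : O1 - O2 = (((a':ℝ)/(c':ℝ) - (a:ℝ)/(c:ℝ) : ℝ):ℂ)
        + ((1/(2*((c':ℝ))^2) - 1/(2*((c:ℝ))^2) : ℝ):ℂ)*I := by
      rw [hO1, hO2]; push_cast; ring
    rw [Complex.dist_eq, hsub, Complex.norm_add_mul_I, hx]
    rw [show (-1/((c:ℝ)*(c':ℝ)))^2 + (1/(2*((c':ℝ))^2) - 1/(2*((c:ℝ))^2))^2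
        = (1/(2*((c':ℝ))^2) + 1/(2*((c:ℝ))^2))^2 by field_simp; ring]
    exact Real.sqrt_sq (by positivity)
  have cancel : ∀ (nn w K : ℂ), w ≠ 0 → nn/w * (K*w) = nn*K := by
    intro nn w K hw
    rw [div_mul_eq_mul_div, mul_comm K w, ← mul_assoc, mul_right_comm, mul_div_cancel_right₀ _ hw]
  have h2c' : (2*((c':ℤ):ℂ)^2) ≠ 0 := mul_ne_zero two_ne_zero (pow_ne_zero 2 hc'C)
  have h2c : (2*((c:ℤ):ℂ)^2) ≠ 0 := mul_ne_zero two_ne_zero (pow_ne_zero 2 hcC)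
  have e1 : Rp - O1 = (((c:ℤ):ℂ) + I*((c':ℤ):ℂ))/(2*((c':ℤ):ℂ)^2*(((c':ℤ):ℂ) + I*((c:ℤ):ℂ))) := by
    rw [eq_div_iff (mul_ne_zero h2c' hne), hRp, hO1, sub_mul, cancel _ _ _ hne]
    field_simp
    linear_combination (2*I*((c':ℤ):ℂ)) * hdC + (-((c:ℤ):ℂ)) * Complex.I_sq
  have e2 : Rp - O2 = (-(((c:ℤ):ℂ) + I*((c':ℤ):ℂ)))/(2*((c:ℤ):ℂ)^2*(((c':ℤ):ℂ) + I*((c:ℤ):ℂ))) := by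
    rw [eq_div_iff (mul_ne_zero h2c hne), hRp, hO2, sub_mul, cancel _ _ _ hne]
    field_simp
    linear_combination (-2*((c:ℤ):ℂ)) * hdC + (-((c:ℤ):ℂ)) * Complex.I_sq
  have hsq : (0:ℝ) < Real.sqrt ((c':ℝ)^2+(c:ℝ)^2) :=
    Real.sqrt_pos.mpr (add_pos_of_pos_of_nonneg (pow_pos hc'R 2) (sq_nonneg _))
  have habs_num : ‖((c:ℤ):ℂ) + I*((c':ℤ):ℂ)‖ = Real.sqrt ((c':ℝ)^2+(c:ℝ)^2) := by
    rw [show ((c:ℤ):ℂ) + I*((c':ℤ):ℂ) = ((c:ℝ):ℂ) + ((c':ℝ):ℂ)*I by push_cast; ring,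
      Complex.norm_add_mul_I, show (c:ℝ)^2+(c':ℝ)^2 = (c':ℝ)^2+(c:ℝ)^2 by ring]
  have habs_den : ∀ k : ℤ, 0 < k → ‖2*((k:ℤ):ℂ)^2*(((c':ℤ):ℂ) + I*((c:ℤ):ℂ))‖
      = 2*(k:ℝ)^2 * Real.sqrt ((c':ℝ)^2+(c:ℝ)^2) := by
    intro k hk
    have hkR : (0:ℝ) < (k:ℝ) := by exact_mod_cast hk
    rw [show (2*((k:ℤ):ℂ)^2*(((c':ℤ):ℂ) + I*((c:ℤ):ℂ)))
        = ((2*(k:ℝ)^2 : ℝ):ℂ) * (((c':ℝ):ℂ) + ((c:ℝ):ℂ)*I) by push_cast; ring,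
      norm_mul, Complex.norm_real, Real.norm_eq_abs, Complex.norm_add_mul_I,
      abs_of_pos (by positivity : (0:ℝ) < 2*(k:ℝ)^2)]
  have habs1 : ‖Rp - O1‖ = 1/(2*((c':ℝ))^2) := by
    rw [e1, norm_div, habs_num, habs_den c' hc', div_eq_div_iff (by positivity) (by positivity)]
    ring
  have habs2 : ‖Rp - O2‖ = 1/(2*((c:ℝ))^2) := by
    rw [e2, norm_div, norm_neg, habs_num, habs_den c hc,
      div_eq_div_iff (by positivity) (by positivity)]
    ring
  ext z
  simp only [Set.mem_inter_iff, Set.mem_singleton_iff, hmem' z, hmem z]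
  constructor
  · rintro ⟨h1, h2⟩
    exact tangent_unique (by positivity) hdist
      (by rw [Complex.dist_eq, norm_sub_rev]; exact habs1)
      (by rw [Complex.dist_eq]; exact habs2)
      (by rw [Complex.dist_eq, norm_sub_rev]; exact h1)
      (by rw [Complex.dist_eq]; exact h2)
  · rintro rfl
    exact ⟨habs1, habs2⟩

lemma farey_pred (N : ℕ) (aa cc a' c' : ℤ) (hc0 : 0 < cc) (hc'0 : 0 < c')
    (hc'N : c' ≤ (N:ℤ)) (hsum : (N:ℤ) + 1 ≤ cc + c')
    (hdet : aa*c' - a'*cc = 1) :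
    ((a':ℚ)/(c':ℚ)) ∈ QN N ∧ (a':ℚ)/(c':ℚ) < (aa:ℚ)/(cc:ℚ) ∧
      (∀ q ∈ QN N, q < (aa:ℚ)/(cc:ℚ) → q ≤ (a':ℚ)/(c':ℚ)) := by
  have hcop' : Int.gcd a' c' = 1 :=
    Int.isCoprime_iff_gcd_eq_one.mp ⟨-cc, aa, by linear_combination hdet⟩
  have hden' : ((((a':ℚ)/(c':ℚ)).den : ℤ)) = c' := Rat.den_div_eq_of_coprime hc'0 hcop'
  have hccQ : (0:ℚ) < (cc:ℚ) := by exact_mod_cast hc0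
  have hc'Q : (0:ℚ) < (c':ℚ) := by exact_mod_cast hc'0
  refine ⟨?_, ?_, ?_⟩
  · show (((a':ℚ)/(c':ℚ)).den : ℕ) ≤ N
    have : ((((a':ℚ)/(c':ℚ)).den : ℤ)) ≤ (N:ℤ) := by rw [hden']; exact hc'N
    exact_mod_cast this
  · rw [div_lt_div_iff₀ hc'Q hccQ]
    have : a' * cc < aa * c' := by linarith
    exact_mod_cast this
  · intro q hq hlt
    by_contra hgt
    push_neg at hgt
    have hqden : (0:ℚ) < (q.den:ℚ) := by positivity
    have h1 : 1 ≤ aa * (q.den:ℤ) - q.num * cc := by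
      rw [← Rat.num_div_den q, div_lt_div_iff₀ hqden hccQ] at hlt
      have : q.num * cc < aa * (q.den:ℤ) := by exact_mod_cast hlt
      linarith
    have h2 : 1 ≤ q.num * c' - a' * (q.den:ℤ) := by
      rw [← Rat.num_div_den q, div_lt_div_iff₀ hc'Q hqden] at hgt
      have : a' * (q.den:ℤ) < q.num * c' := by exact_mod_cast hgt
      linarith
    have hkey : ((q.den:ℤ)) = c'*(aa*(q.den:ℤ) - q.num*cc) + cc*(q.num*c' - a'*(q.den:ℤ)) := by
      linear_combination (-(q.den:ℤ)) * hdet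
    have hbig : (N:ℤ) + 1 ≤ (q.den:ℤ) := by nlinarith
    have hsmall : (q.den:ℤ) ≤ (N:ℤ) := by exact_mod_cast hq
    linarith

lemma farey_succ (N : ℕ) (aa cc a'' c'' : ℤ) (hc0 : 0 < cc) (hc''0 : 0 < c'')
    (hc''N : c'' ≤ (N:ℤ)) (hsum : (N:ℤ) + 1 ≤ cc + c'')
    (hdet : a''*cc - aa*c'' = 1) :
    ((a'':ℚ)/(c'':ℚ)) ∈ QN N ∧ (aa:ℚ)/(cc:ℚ) < (a'':ℚ)/(c'':ℚ) ∧
      (∀ q ∈ QN N, (aa:ℚ)/(cc:ℚ) < q → (a'':ℚ)/(c'':ℚ) ≤ q) := by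
  obtain ⟨h1, h2, h3⟩ := farey_pred N (-aa) cc (-a'') c'' hc0 hc''0 hc''N hsum
    (by linear_combination hdet)
  have hneg : ((-a'' : ℤ):ℚ)/(c'':ℚ) = -((a'':ℚ)/(c'':ℚ)) := by push_cast; ring
  have hnega : ((-aa : ℤ):ℚ)/(cc:ℚ) = -((aa:ℚ)/(cc:ℚ)) := by push_cast; ring
  refine ⟨?_, ?_, ?_⟩
  · show (((a'':ℚ)/(c'':ℚ)).den : ℕ) ≤ N
    have := h1
    rw [hneg] at this
    simpa [QN, Rat.neg_den] using this
  · rw [hneg, hnega] at h2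
    linarith
  · intro q hq hlt
    have hmq : -q ∈ QN N := by simpa [QN, Rat.neg_den] using hq
    have := h3 (-q) hmq (by rw [hnega]; linarith)
    rw [hneg] at this
    linarith

end Aux

set_option maxHeartbeats 1000000 in
/-- **Proposition 5 (§3.2).**  Let `N ≥ 1`, `γ = (a b; c d) ∈ SL₂(ℤ)` with `0 < c ≤ N`,
`x = a/c`; let `n`, `m` be the largest integers with `d + nc ≤ N`, `-d + mc ≤ N`, and put
`a′ = b + na`, `c′ = d + nc`, `a′′ = -b + ma`, `c′′ = -d + mc`.  Then
`1 ≤ c′, c′′ ≤ N`, `c + c′ ≥ N+1`, `c + c′′ ≥ N+1`, and: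
(a) `a′/c′` is the predecessor and `a′′/c′′` the successor of `x` in `Q_N`;
(b) the Ford circles `C_{a′/c′}` and `C_x` are tangent at
`R = (ac + a′c′ + i)/(c² + c′²) = (a′ + ia)/(c′ + ic)` (their intersection is exactly `{R}`),
and `C_x`, `C_{a′′/c′′}` are tangent at `S = (ac + a′′c′′ + i)/(c² + c′′²) = (a′′ - ia)/(c′′ - ic)`;
(c) `Im R` and `Im S` lie in `[1/(2N²), 2/(N+1)²]`;
(d) `γ(n+i) = R`, `γ(-m+i) = S`, and the image of the segment `[n+i, -m+i]` under `z ↦ γz`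
is the arc of `C_x` from `R` to `S` traversed clockwise. -/
theorem prop5_ford_circles
    (N : ℕ) (hN : 1 ≤ N)
    (γ : SL2Z) (aa bb cc dd : ℤ)
    (hent : (γ 0 0 : ℤ) = aa ∧ (γ 0 1 : ℤ) = bb ∧ (γ 1 0 : ℤ) = cc ∧ (γ 1 1 : ℤ) = dd)
    (hc0 : 0 < cc) (hcN : cc ≤ (N : ℤ))
    (n m : ℤ)
    (hn : dd + n * cc ≤ (N : ℤ) ∧ ∀ n' : ℤ, dd + n' * cc ≤ (N : ℤ) → n' ≤ n)
    (hm : -dd + m * cc ≤ (N : ℤ) ∧ ∀ m' : ℤ, -dd + m' * cc ≤ (N : ℤ) → m' ≤ m)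
    (a' c' a'' c'' : ℤ)
    (ha' : a' = bb + n * aa) (hc' : c' = dd + n * cc)
    (ha'' : a'' = -bb + m * aa) (hc'' : c'' = -dd + m * cc)
    (R S : ℂ)
    (hR : R = ((a' : ℂ) + I * (aa : ℂ)) / ((c' : ℂ) + I * (cc : ℂ)))
    (hS : S = ((a'' : ℂ) - I * (aa : ℂ)) / ((c'' : ℂ) - I * (cc : ℂ))) :
    -- bounds on c′ and c′′
    (1 ≤ c' ∧ c' ≤ (N : ℤ) ∧ 1 ≤ c'' ∧ c'' ≤ (N : ℤ) ∧
      (N : ℤ) + 1 ≤ cc + c' ∧ (N : ℤ) + 1 ≤ cc + c'') ∧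
    -- (a): predecessor and successor in Q_N
    (((a' : ℚ) / (c' : ℚ)) ∈ QN N ∧ (a' : ℚ) / (c' : ℚ) < (aa : ℚ) / (cc : ℚ) ∧
      (∀ q ∈ QN N, q < (aa : ℚ) / (cc : ℚ) → q ≤ (a' : ℚ) / (c' : ℚ))) ∧
    (((a'' : ℚ) / (c'' : ℚ)) ∈ QN N ∧ (aa : ℚ) / (cc : ℚ) < (a'' : ℚ) / (c'' : ℚ) ∧
      (∀ q ∈ QN N, (aa : ℚ) / (cc : ℚ) < q → (a'' : ℚ) / (c'' : ℚ) ≤ q)) ∧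
    -- (b): tangency points
    (R = (((aa * cc + a' * c' : ℤ) : ℂ) + I) / ((cc ^ 2 + c' ^ 2 : ℤ) : ℂ) ∧
      S = (((aa * cc + a'' * c'' : ℤ) : ℂ) + I) / ((cc ^ 2 + c'' ^ 2 : ℤ) : ℂ) ∧
      FordC ((a' : ℚ) / (c' : ℚ)) ∩ FordC ((aa : ℚ) / (cc : ℚ)) = {R} ∧
      FordC ((aa : ℚ) / (cc : ℚ)) ∩ FordC ((a'' : ℚ) / (c'' : ℚ)) = {S}) ∧
    -- (c): imaginary parts
    (R.im ∈ Set.Icc (1 / (2 * (N : ℝ) ^ 2)) (2 / ((N : ℝ) + 1) ^ 2) ∧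
      S.im ∈ Set.Icc (1 / (2 * (N : ℝ) ^ 2)) (2 / ((N : ℝ) + 1) ^ 2)) ∧
    -- (d): the image of the segment [n+i, -m+i] is the clockwise arc from R to S on C_x
    (moeb γ ((n : ℂ) + I) = R ∧ moeb γ (-(m : ℂ) + I) = S ∧
      ∃ Δ : ℝ, 0 ≤ Δ ∧ Δ < 2 * π ∧
        (let O : ℂ := ((aa : ℚ) / (cc : ℚ) : ℚ) + I / (2 * (cc : ℂ) ^ 2);
         O + (R - O) * Complex.exp (-I * Δ) = S ∧
         moeb γ '' segment ℝ ((n : ℂ) + I) (-(m : ℂ) + I) =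
           (fun s : ℝ => O + (R - O) * Complex.exp (-I * s)) '' Set.Icc 0 Δ)) := by
  obtain ⟨hga, hgb, hgc, hgd⟩ := hent
  have hdet : aa * dd - bb * cc = 1 := by
    have h := γ.2
    rw [Matrix.det_fin_two] at h
    rw [← hga, ← hgb, ← hgc, ← hgd]
    exact h
  -- bounds
  have hc'N : c' ≤ (N:ℤ) := by rw [hc']; exact hn.1
  have hsum' : (N:ℤ) + 1 ≤ cc + c' := by
    by_contra hcon
    push_neg at hcon
    have h1 : dd + (n+1)*cc ≤ (N:ℤ) := by rw [hc'] at hcon; linarith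
    linarith [hn.2 (n+1) h1]
  have hc'1 : 1 ≤ c' := by linarith
  have hc''N : c'' ≤ (N:ℤ) := by rw [hc'']; exact hm.1
  have hsum'' : (N:ℤ) + 1 ≤ cc + c'' := by
    by_contra hcon
    push_neg at hcon
    have h1 : -dd + (m+1)*cc ≤ (N:ℤ) := by rw [hc''] at hcon; linarith
    linarith [hm.2 (m+1) h1]
  have hc''1 : 1 ≤ c'' := by linarith
  have hc'0 : (0:ℤ) < c' := by linarith
  have hc''0 : (0:ℤ) < c'' := by linarith
  -- determinants
  have hdet' : aa*c' - a'*cc = 1 := by rw [ha', hc']; linear_combination hdet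
  have hdet'' : a''*cc - aa*c'' = 1 := by rw [ha'', hc'']; linear_combination hdet
  have hdet'C : ((aa:ℤ):ℂ)*((c':ℤ):ℂ) - ((a':ℤ):ℂ)*((cc:ℤ):ℂ) = 1 := by exact_mod_cast hdet'
  have hdet''C : ((a'':ℤ):ℂ)*((cc:ℤ):ℂ) - ((aa:ℤ):ℂ)*((c'':ℤ):ℂ) = 1 := by exact_mod_cast hdet''
  -- part (a)
  have hpred := farey_pred N aa cc a' c' hc0 hc'0 hc'N hsum' hdet'
  have hsucc := farey_succ N aa cc a'' c'' hc0 hc''0 hc''N hsum'' hdet''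
  -- part (b): coordinates of R and S
  have hne' : ((c':ℤ):ℂ) + I*((cc:ℤ):ℂ) ≠ 0 := line_ne' c' cc hc0.ne'
  have hne'' : ((c'':ℤ):ℂ) - I*((cc:ℤ):ℂ) ≠ 0 := by
    intro h
    have := congrArg Complex.im h
    simp at this
    exact hc0.ne' (by exact_mod_cast this)
  have hD' : (((cc^2 + c'^2 : ℤ)):ℂ) ≠ 0 := by
    have h : (0:ℤ) < cc^2 + c'^2 := by positivity
    exact_mod_cast h.ne'
  have hD'' : (((cc^2 + c''^2 : ℤ)):ℂ) ≠ 0 := by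
    have h : (0:ℤ) < cc^2 + c''^2 := by positivity
    exact_mod_cast h.ne'
  have hReq : R = (((aa * cc + a' * c' : ℤ) : ℂ) + I) / ((cc ^ 2 + c' ^ 2 : ℤ) : ℂ) := by
    rw [hR, div_eq_div_iff hne' hD']
    push_cast
    linear_combination (I*((c':ℤ):ℂ) - ((cc:ℤ):ℂ)) * hdet'C + (-((cc:ℤ):ℂ)) * Complex.I_sq
  have hSeq : S = (((aa * cc + a'' * c'' : ℤ) : ℂ) + I) / ((cc ^ 2 + c'' ^ 2 : ℤ) : ℂ) := by
    rw [hS, div_eq_div_iff hne'' hD'']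
    push_cast
    linear_combination (((cc:ℤ):ℂ) + I*((c'':ℤ):ℂ)) * hdet''C + (((cc:ℤ):ℂ)) * Complex.I_sq
  -- part (b): intersections
  have hint1 : FordC ((a' : ℚ) / (c' : ℚ)) ∩ FordC ((aa : ℚ) / (cc : ℚ)) = {R} := by
    rw [ford_tangent aa cc a' c' hc0 hc'0 hdet', ← hR]
  have hint2 : FordC ((aa : ℚ) / (cc : ℚ)) ∩ FordC ((a'' : ℚ) / (c'' : ℚ)) = {S} := by
    rw [ford_tangent a'' c'' aa cc hc''0 hc0 hdet'']
    congr 1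
    rw [hS, div_eq_div_iff (line_ne' cc c'' hc''0.ne') hne'']
    linear_combination (((aa:ℤ):ℂ)*((c'':ℤ):ℂ) - ((a'':ℤ):ℂ)*((cc:ℤ):ℂ)) * Complex.I_sq
  -- part (c)
  have hccR : (0:ℝ) < ((cc:ℤ):ℝ) := by exact_mod_cast hc0
  have hccRN : ((cc:ℤ):ℝ) ≤ (N:ℝ) := by exact_mod_cast hcN
  have hc'R1 : (1:ℝ) ≤ ((c':ℤ):ℝ) := by exact_mod_cast hc'1
  have hc''R1 : (1:ℝ) ≤ ((c'':ℤ):ℝ) := by exact_mod_cast hc''1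
  have hc'RN : ((c':ℤ):ℝ) ≤ (N:ℝ) := by exact_mod_cast hc'N
  have hc''RN : ((c'':ℤ):ℝ) ≤ (N:ℝ) := by exact_mod_cast hc''N
  have hccR1 : (1:ℝ) ≤ ((cc:ℤ):ℝ) := by exact_mod_cast hc0
  have hsumR' : (N:ℝ) + 1 ≤ ((cc:ℤ):ℝ) + ((c':ℤ):ℝ) := by exact_mod_cast hsum'
  have hsumR'' : (N:ℝ) + 1 ≤ ((cc:ℤ):ℝ) + ((c'':ℤ):ℝ) := by exact_mod_cast hsum''
  have hNR : (1:ℝ) ≤ (N:ℝ) := by exact_mod_cast hN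
  have hRim : R.im = 1/(((cc:ℤ):ℝ)^2 + ((c':ℤ):ℝ)^2) := by
    rw [hReq, show (((cc^2+c'^2 : ℤ)):ℂ) = ((((cc:ℤ):ℝ)^2+((c':ℤ):ℝ)^2 : ℝ):ℂ) by push_cast; ring,
      Complex.div_ofReal_im]
    simp
  have hSim : S.im = 1/(((cc:ℤ):ℝ)^2 + ((c'':ℤ):ℝ)^2) := by
    rw [hSeq, show (((cc^2+c''^2 : ℤ)):ℂ) = ((((cc:ℤ):ℝ)^2+((c'':ℤ):ℝ)^2 : ℝ):ℂ) by push_cast; ring,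
      Complex.div_ofReal_im]
    simp
  have hIm : ∀ x : ℝ, 1 ≤ x → x ≤ N → (N:ℝ) + 1 ≤ ((cc:ℤ):ℝ) + x →
      1/(((cc:ℤ):ℝ)^2 + x^2) ∈ Set.Icc (1 / (2 * (N : ℝ) ^ 2)) (2 / ((N : ℝ) + 1) ^ 2) := by
    intro x h1 h2 h3
    have hpos : (0:ℝ) < ((cc:ℤ):ℝ)^2 + x^2 := by positivity
    constructor
    · apply one_div_le_one_div_of_le hpos
      nlinarith
    · rw [div_le_div_iff₀ hpos (by positivity)]
      nlinarith [sq_nonneg (((cc:ℤ):ℝ) - x)]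
  -- part (d): moeb values
  have hmoebR : moeb γ ((n : ℂ) + I) = R := by
    simp only [moeb, hga, hgb, hgc, hgd]
    rw [hR, show ((aa:ℤ):ℂ)*((n:ℂ)+I) + ((bb:ℤ):ℂ) = ((a':ℤ):ℂ) + I*((aa:ℤ):ℂ) by
        rw [ha']; push_cast; ring,
      show ((cc:ℤ):ℂ)*((n:ℂ)+I) + ((dd:ℤ):ℂ) = ((c':ℤ):ℂ) + I*((cc:ℤ):ℂ) by
        rw [hc']; push_cast; ring]
  have hmoebS : moeb γ (-(m : ℂ) + I) = S := by
    simp only [moeb, hga, hgb, hgc, hgd]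
    rw [hS, show ((aa:ℤ):ℂ)*(-(m:ℂ)+I) + ((bb:ℤ):ℂ) = -(((a'':ℤ):ℂ) - I*((aa:ℤ):ℂ)) by
        rw [ha'']; push_cast; ring,
      show ((cc:ℤ):ℂ)*(-(m:ℂ)+I) + ((dd:ℤ):ℂ) = -(((c'':ℤ):ℂ) - I*((cc:ℤ):ℂ)) by
        rw [hc'']; push_cast; ring,
      neg_div_neg_eq]
  -- part (d): the arc
  have hdetR : ((aa:ℤ):ℝ)*((dd:ℤ):ℝ) - ((bb:ℤ):ℝ)*((cc:ℤ):ℝ) = 1 := by exact_mod_cast hdet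
  have hcast : ∀ k : ℤ, (((k:ℤ):ℝ):ℂ) = ((k:ℤ):ℂ) := fun k => by push_cast; rfl
  have hmoebL : ∀ u : ℝ, moeb γ ((u:ℂ) + I)
      = ((((aa:ℤ):ℝ)/((cc:ℤ):ℝ) : ℝ):ℂ) + I/(2*((cc:ℤ):ℂ)^2)
        + (1/(2*((cc:ℤ):ℂ)^2)) * Complex.exp ((↑(2*Real.arctan ((((cc:ℤ):ℝ)*u+((dd:ℤ):ℝ))/((cc:ℤ):ℝ)) - 3*π/2) : ℂ) * I) := by
    intro u
    have h := moeb_on_line ((aa:ℤ):ℝ) ((bb:ℤ):ℝ) ((cc:ℤ):ℝ) ((dd:ℤ):ℝ) u hccR hdetR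
    simp only [hcast] at h
    simpa only [moeb, hga, hgb, hgc, hgd] using h
  have harg : ∀ t : ℝ, ((cc:ℤ):ℝ)*(((n:ℤ):ℝ) - t*(((n:ℤ):ℝ)+((m:ℤ):ℝ))) + ((dd:ℤ):ℝ)
      = ((c':ℤ):ℝ) - t*(((c':ℤ):ℝ)+((c'':ℤ):ℝ)) := by
    intro t
    rw [hc', hc'']
    push_cast
    ring
  have hz : ∀ t : ℝ, ((n:ℂ)+I) + t•((-(m:ℂ)+I) - ((n:ℂ)+I))
      = ((((n:ℤ):ℝ) - t*(((n:ℤ):ℝ)+((m:ℤ):ℝ)) : ℝ):ℂ) + I := by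
    intro t
    rw [Complex.real_smul]
    push_cast
    ring
  have hEt : ∀ t : ℝ, moeb γ (((n:ℂ)+I) + t•((-(m:ℂ)+I) - ((n:ℂ)+I)))
      = ((((aa:ℤ):ℝ)/((cc:ℤ):ℝ) : ℝ):ℂ) + I/(2*((cc:ℤ):ℂ)^2)
        + (1/(2*((cc:ℤ):ℂ)^2)) * Complex.exp ((↑(2*Real.arctan ((((c':ℤ):ℝ) - t*(((c':ℤ):ℝ)+((c'':ℤ):ℝ)))/((cc:ℤ):ℝ)) - 3*π/2) : ℂ) * I) := by
    intro t
    rw [hz t, hmoebL _, harg t]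
  have hR0 : R = ((((aa:ℤ):ℝ)/((cc:ℤ):ℝ) : ℝ):ℂ) + I/(2*((cc:ℤ):ℂ)^2)
      + (1/(2*((cc:ℤ):ℂ)^2)) * Complex.exp ((↑(2*Real.arctan (((c':ℤ):ℝ)/((cc:ℤ):ℝ)) - 3*π/2) : ℂ) * I) := by
    have h := hEt 0
    rw [zero_smul, add_zero, hmoebR] at h
    rw [h]
    norm_num
  have hO : ((((aa:ℚ)/(cc:ℚ)) : ℚ) : ℂ) + I / (2*((cc:ℤ):ℂ)^2)
      = ((((aa:ℤ):ℝ)/((cc:ℤ):ℝ) : ℝ):ℂ) + I/(2*((cc:ℤ):ℂ)^2) := by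
    push_cast
    ring
  have hptw : ∀ t : ℝ, moeb γ (((n:ℂ)+I) + t•((-(m:ℂ)+I) - ((n:ℂ)+I)))
      = (((((aa:ℚ)/(cc:ℚ)) : ℚ) : ℂ) + I / (2*((cc:ℤ):ℂ)^2))
        + (R - (((((aa:ℚ)/(cc:ℚ)) : ℚ) : ℂ) + I / (2*((cc:ℤ):ℂ)^2))) * Complex.exp (-I * ((2*Real.arctan (((c':ℤ):ℝ)/((cc:ℤ):ℝ)) - 2*Real.arctan ((((c':ℤ):ℝ) - t*(((c':ℤ):ℝ)+((c'':ℤ):ℝ)))/((cc:ℤ):ℝ)) : ℝ) : ℂ)) := by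
    intro t
    have hE : Complex.exp ((↑(2*Real.arctan (((c':ℤ):ℝ)/((cc:ℤ):ℝ)) - 3*π/2) : ℂ) * I)
          * Complex.exp (-I * ((2*Real.arctan (((c':ℤ):ℝ)/((cc:ℤ):ℝ)) - 2*Real.arctan ((((c':ℤ):ℝ) - t*(((c':ℤ):ℝ)+((c'':ℤ):ℝ)))/((cc:ℤ):ℝ)) : ℝ) : ℂ))
        = Complex.exp ((↑(2*Real.arctan ((((c':ℤ):ℝ) - t*(((c':ℤ):ℝ)+((c'':ℤ):ℝ)))/((cc:ℤ):ℝ)) - 3*π/2) : ℂ) * I) := by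
      rw [← Complex.exp_add]
      congr 1
      push_cast
      ring
    rw [hEt t, hO, hR0, add_sub_cancel_left, mul_assoc, hE]
  have hmono : ∀ x y : ℝ, x ≤ y →
      (2*Real.arctan (((c':ℤ):ℝ)/((cc:ℤ):ℝ)) - 2*Real.arctan ((((c':ℤ):ℝ) - x*(((c':ℤ):ℝ)+((c'':ℤ):ℝ)))/((cc:ℤ):ℝ)))
        ≤ (2*Real.arctan (((c':ℤ):ℝ)/((cc:ℤ):ℝ)) - 2*Real.arctan ((((c':ℤ):ℝ) - y*(((c':ℤ):ℝ)+((c'':ℤ):ℝ)))/((cc:ℤ):ℝ))) := by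
    intro x y hxy
    have h1 : ((c':ℤ):ℝ) - y*(((c':ℤ):ℝ)+((c'':ℤ):ℝ)) ≤ ((c':ℤ):ℝ) - x*(((c':ℤ):ℝ)+((c'':ℤ):ℝ)) := by
      have hS0 : (0:ℝ) ≤ ((c':ℤ):ℝ)+((c'':ℤ):ℝ) := by linarith
      have := mul_le_mul_of_nonneg_right hxy hS0
      linarith
    have h2 := Real.arctan_strictMono.monotone ((div_le_div_iff_of_pos_right hccR).mpr h1)
    linarith
  have hcont : Continuous (fun t:ℝ =>
      2*Real.arctan (((c':ℤ):ℝ)/((cc:ℤ):ℝ)) - 2*Real.arctan ((((c':ℤ):ℝ) - t*(((c':ℤ):ℝ)+((c'':ℤ):ℝ)))/((cc:ℤ):ℝ))) := by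
    apply Continuous.sub continuous_const
    exact continuous_const.mul (Real.continuous_arctan.comp
      ((continuous_const.sub (continuous_id.mul continuous_const)).div_const _))
  have hs0 : (2*Real.arctan (((c':ℤ):ℝ)/((cc:ℤ):ℝ)) - 2*Real.arctan ((((c':ℤ):ℝ) - (0:ℝ)*(((c':ℤ):ℝ)+((c'':ℤ):ℝ)))/((cc:ℤ):ℝ))) = 0 := by
    norm_num
  have hs1 : (2*Real.arctan (((c':ℤ):ℝ)/((cc:ℤ):ℝ)) - 2*Real.arctan ((((c':ℤ):ℝ) - (1:ℝ)*(((c':ℤ):ℝ)+((c'':ℤ):ℝ)))/((cc:ℤ):ℝ)))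
      = 2*(Real.arctan (((c':ℤ):ℝ)/((cc:ℤ):ℝ)) + Real.arctan (((c'':ℤ):ℝ)/((cc:ℤ):ℝ))) := by
    rw [show ((c':ℤ):ℝ) - (1:ℝ)*(((c':ℤ):ℝ)+((c'':ℤ):ℝ)) = -((c'':ℤ):ℝ) by ring, neg_div,
      Real.arctan_neg]
    ring
  have himage : (fun t:ℝ =>
      2*Real.arctan (((c':ℤ):ℝ)/((cc:ℤ):ℝ)) - 2*Real.arctan ((((c':ℤ):ℝ) - t*(((c':ℤ):ℝ)+((c'':ℤ):ℝ)))/((cc:ℤ):ℝ))) '' Set.Icc 0 1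
      = Set.Icc 0 (2*(Real.arctan (((c':ℤ):ℝ)/((cc:ℤ):ℝ)) + Real.arctan (((c'':ℤ):ℝ)/((cc:ℤ):ℝ)))) := by
    apply Set.Subset.antisymm
    · rintro x ⟨t, ht, rfl⟩
      constructor
      · have := hmono 0 t ht.1
        rw [hs0] at this
        exact this
      · have := hmono t 1 ht.2
        rw [hs1] at this
        exact this
    · intro y hy
      have hsub := intermediate_value_Icc (by norm_num : (0:ℝ) ≤ 1) hcont.continuousOn
      rw [hs0, hs1] at hsub
      exact hsub hy
  refine ⟨⟨hc'1, hc'N, hc''1, hc''N, hsum', hsum''⟩, hpred, hsucc, ⟨hReq, hSeq, hint1, hint2⟩,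
    ⟨by rw [hRim]; exact hIm _ hc'R1 hc'RN hsumR', by rw [hSim]; exact hIm _ hc''R1 hc''RN hsumR''⟩,
    hmoebR, hmoebS,
    2*(Real.arctan (((c':ℤ):ℝ)/((cc:ℤ):ℝ)) + Real.arctan (((c'':ℤ):ℝ)/((cc:ℤ):ℝ))), ?_, ?_, ?_, ?_⟩
  · have h1 := Real.arctan_strictMono.monotone (show (0:ℝ) ≤ ((c':ℤ):ℝ)/((cc:ℤ):ℝ) from
      div_nonneg (by linarith) hccR.le)
    have h2 := Real.arctan_strictMono.monotone (show (0:ℝ) ≤ ((c'':ℤ):ℝ)/((cc:ℤ):ℝ) from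
      div_nonneg (by linarith) hccR.le)
    rw [Real.arctan_zero] at h1 h2
    linarith
  · have h1 := Real.arctan_lt_pi_div_two (((c':ℤ):ℝ)/((cc:ℤ):ℝ))
    have h2 := Real.arctan_lt_pi_div_two (((c'':ℤ):ℝ)/((cc:ℤ):ℝ))
    linarith
  · -- O + (R-O) exp(-IΔ) = S
    have h := hptw 1
    rw [one_smul, add_sub_cancel, hmoebS] at h
    rw [show (2*(Real.arctan (((c':ℤ):ℝ)/((cc:ℤ):ℝ)) + Real.arctan (((c'':ℤ):ℝ)/((cc:ℤ):ℝ))) : ℝ)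
        = (2*Real.arctan (((c':ℤ):ℝ)/((cc:ℤ):ℝ)) - 2*Real.arctan ((((c':ℤ):ℝ) - (1:ℝ)*(((c':ℤ):ℝ)+((c'':ℤ):ℝ)))/((cc:ℤ):ℝ))) from hs1.symm]
    exact h.symm
  · -- image of segment
    rw [segment_eq_image' ℝ ((n:ℂ)+I) (-(m:ℂ)+I), Set.image_image,
      Set.image_congr (fun t _ => hptw t),
      show (fun t:ℝ => (((((aa:ℚ)/(cc:ℚ)) : ℚ) : ℂ) + I / (2*((cc:ℤ):ℂ)^2))
        + (R - ((((((aa:ℚ)/(cc:ℚ)) : ℚ) : ℂ)) + I / (2*((cc:ℤ):ℂ)^2))) * Complex.exp (-I * ((2*Real.arctan (((c':ℤ):ℝ)/((cc:ℤ):ℝ)) - 2*Real.arctan ((((c':ℤ):ℝ) - t*(((c':ℤ):ℝ)+((c'':ℤ):ℝ)))/((cc:ℤ):ℝ)) : ℝ) : ℂ)))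
        = (fun s:ℝ => (((((aa:ℚ)/(cc:ℚ)) : ℚ) : ℂ) + I / (2*((cc:ℤ):ℂ)^2))
            + (R - ((((((aa:ℚ)/(cc:ℚ)) : ℚ) : ℂ)) + I / (2*((cc:ℤ):ℂ)^2))) * Complex.exp (-I * (s:ℂ)))
          ∘ (fun t:ℝ => 2*Real.arctan (((c':ℤ):ℝ)/((cc:ℤ):ℝ)) - 2*Real.arctan ((((c':ℤ):ℝ) - t*(((c':ℤ):ℝ)+((c'':ℤ):ℝ)))/((cc:ℤ):ℝ))) from rfl,
      Set.image_comp, himage]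
end
end
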